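/- arXiv:1511.07699 — 7 statements merged into one kernel-verified Lean document; each statement's English description precedes it below -/
import Mathlib

section
/- Let 𝒟 be an additive ℂ-linear rigid symmetric monoidal category, 𝒱 a tensor category, and I : 𝒟 → 𝒱 a ℂ-linear symmetric monoidal functor satisfying assumptions (1)–(3). Let F : 𝒟 → 𝒜 be a faithful ℂ-linear symmetric monoidal functor into a tensor category 𝒜. If (U, θ) and (U′, θ′) are two pairs consisting of an exact symmetric monoidal functor 𝒱 → 𝒜 and a monoidal natural isomorphism θ : U ∘ I ≅ F (resp. θ′ : U′ ∘ I ≅ F), then there exists a unique monoidal natural isomorphism φ : U ≅ U′ such that θ′_X ∘ φ_{I(X)} = θ_X for every object X of 𝒟. (Uniqueness part of the main universality theorem: the groupoid of such lifts is contractible.) -/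
open CategoryTheory CategoryTheory.Limits CategoryTheory.MonoidalCategory

section AuxEpi
variable {C : Type*} [Category C] [MonoidalCategory C]

lemma aux_epi_whiskerLeft (X : C) [HasLeftDual X] {Y Z : C} (f : Y ⟶ Z) [Epi f] :
    Epi (X ◁ f) := by
  have : (tensorLeft X).PreservesEpimorphisms :=
    Functor.preservesEpimorphisms_of_adjunction (tensorLeftAdjunction (ᘁX) X)
  simpa using (tensorLeft X).map_epi f

lemma aux_epi_whiskerRight {Y Z : C} (f : Y ⟶ Z) [Epi f] (X : C) [HasRightDual X] :
    Epi (f ▷ X) := by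
  have : (tensorRight X).PreservesEpimorphisms :=
    Functor.preservesEpimorphisms_of_adjunction (tensorRightAdjunction X (Xᘁ))
  simpa using (tensorRight X).map_epi f

lemma aux_epi_tensorHom [RigidCategory C] {Y Z Y' Z' : C} (f : Y ⟶ Z) (g : Y' ⟶ Z')
    [Epi f] [Epi g] : Epi (f ⊗ₘ g) := by
  rw [MonoidalCategory.tensorHom_def]
  have h1 := aux_epi_whiskerRight f Y'
  have h2 := aux_epi_whiskerLeft Z g
  exact epi_comp _ _
end AuxEpi

universe v₁ v₂ v₃ u₁ u₂ u₃

theorem deligne_universality_uniqueness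
    {D : Type u₁} [Category.{v₁} D] [Preadditive D] [CategoryTheory.Linear ℂ D]
    [HasFiniteBiproducts D] [MonoidalCategory D] [SymmetricCategory D]
    [MonoidalPreadditive D] [MonoidalLinear ℂ D] [RigidCategory D]
    {V : Type u₂} [Category.{v₂} V] [Abelian V] [CategoryTheory.Linear ℂ V]
    [MonoidalCategory V] [SymmetricCategory V] [MonoidalPreadditive V]
    [MonoidalLinear ℂ V] [RigidCategory V]
    (hV : Function.Bijective fun c : ℂ => c • (𝟙 (𝟙_ V)))
    (I : D ⥤ V) [I.Braided] [I.Additive] [I.Linear ℂ] [I.Full] [I.Faithful]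
    (h2 : ∀ M : V, ∃ (P Q : D) (f : P ⟶ Q), Nonempty (image (I.map f) ≅ M))
    (h3e : ∀ ⦃X Y : V⦄ (g : X ⟶ Y), Epi g →
      ∃ T : D, ¬ IsZero T ∧ IsSplitEpi (g ▷ I.obj T))
    (h3m : ∀ ⦃X Y : V⦄ (g : X ⟶ Y), Mono g →
      ∃ T : D, ¬ IsZero T ∧ IsSplitMono (g ▷ I.obj T))
    {A : Type u₃} [Category.{v₃} A] [Abelian A] [CategoryTheory.Linear ℂ A]
    [MonoidalCategory A] [SymmetricCategory A] [MonoidalPreadditive A]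
    [MonoidalLinear ℂ A] [RigidCategory A]
    (hA : Function.Bijective fun c : ℂ => c • (𝟙 (𝟙_ A)))
    (F : D ⥤ A) [F.Braided] [F.Additive] [F.Linear ℂ] [F.Faithful]
    (U : V ⥤ A) [U.Braided] [PreservesFiniteLimits U] [PreservesFiniteColimits U]
    (U' : V ⥤ A) [U'.Braided] [PreservesFiniteLimits U'] [PreservesFiniteColimits U']
    (θ : I ⋙ U ≅ F) [NatTrans.IsMonoidal θ.hom]
    (θ' : I ⋙ U' ≅ F) [NatTrans.IsMonoidal θ'.hom] :
    ∃! φ : U ≅ U', NatTrans.IsMonoidal φ.hom ∧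
      ∀ X : D, φ.hom.app (I.obj X) ≫ θ'.hom.app X = θ.hom.app X := by
  classical
  clear hV hA h3e h3m
  -- the comparison isomorphism `a : I ⋙ U ≅ I ⋙ U'`
  let a : I ⋙ U ≅ I ⋙ U' := θ ≪≫ θ'.symm
  haveI ha : NatTrans.IsMonoidal a.hom :=
    inferInstanceAs (NatTrans.IsMonoidal (θ.hom ≫ θ'.inv))
  have anat : ∀ {X Y : D} (u : X ⟶ Y),
      U.map (I.map u) ≫ a.hom.app Y = a.hom.app X ≫ U'.map (I.map u) :=
    fun u => a.hom.naturality u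
  have anat' : ∀ {X Y : D} (u : X ⟶ Y),
      U'.map (I.map u) ≫ a.inv.app Y = a.inv.app X ≫ U.map (I.map u) :=
    fun u => a.inv.naturality u
  have haapp : ∀ X : D, a.hom.app X = θ.hom.app X ≫ θ'.inv.app X := fun X => rfl
  clear_value a
  -- choose presentations
  choose P Q f t using h2
  let e : ∀ M : V, I.obj (P M) ⟶ M :=
    fun M => factorThruImage (I.map (f M)) ≫ (t M).some.hom
  let m : ∀ M : V, M ⟶ I.obj (Q M) :=
    fun M => (t M).some.inv ≫ image.ι (I.map (f M))
  have hem : ∀ M, e M ≫ m M = I.map (f M) := fun M => by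
    simp [e, m]
  haveI hEpi : ∀ M, Epi (e M) := fun M => by
    dsimp only [e]; infer_instance
  haveI hMono : ∀ M, Mono (m M) := fun M => by
    dsimp only [m]; infer_instance
  haveI hUe : ∀ M, Epi (U.map (e M)) := fun M => U.map_epi _
  haveI hU'e : ∀ M, Epi (U'.map (e M)) := fun M => U'.map_epi _
  haveI hUm : ∀ M, Mono (U.map (m M)) := fun M => U.map_mono _
  haveI hU'm : ∀ M, Mono (U'.map (m M)) := fun M => U'.map_mono _
  clear_value e m
  have hUem : ∀ M, U.map (e M) ≫ U.map (m M) = U.map (I.map (f M)) := fun M => by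
    rw [← U.map_comp, hem]
  have hU'em : ∀ M, U'.map (e M) ≫ U'.map (m M) = U'.map (I.map (f M)) := fun M => by
    rw [← U'.map_comp, hem]
  -- the forward components
  have key : ∀ M, kernel.ι (U.map (e M)) ≫ (a.hom.app (P M) ≫ U'.map (e M)) = 0 := by
    intro M
    rw [← cancel_mono (U'.map (m M))]
    simp only [Category.assoc, zero_comp]
    rw [hU'em M, ← anat (f M), ← reassoc_of% (hUem M), kernel.condition_assoc, zero_comp]
  let c : ∀ M : V, U.obj M ⟶ U'.obj M :=
    fun M => Abelian.epiDesc (U.map (e M)) (a.hom.app (P M) ≫ U'.map (e M)) (key M)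
  have hcA : ∀ M, U.map (e M) ≫ c M = a.hom.app (P M) ≫ U'.map (e M) :=
    fun M => Abelian.comp_epiDesc _ _ _
  have hcB : ∀ M, c M ≫ U'.map (m M) = U.map (m M) ≫ a.hom.app (Q M) := by
    intro M
    rw [← cancel_epi (U.map (e M)), reassoc_of% (hcA M), hU'em M, ← anat (f M),
      ← reassoc_of% (hUem M)]
  -- naturality of the forward components
  have hnat : ∀ {M N : V} (h : M ⟶ N), U.map h ≫ c N = c M ≫ U'.map h := by
    intro M N h
    have hIu : I.map (I.preimage (e M ≫ h ≫ m N)) = e M ≫ h ≫ m N := I.map_preimage _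
    rw [← cancel_epi (U.map (e M)), ← cancel_mono (U'.map (m N))]
    simp only [Category.assoc]
    rw [hcB N, ← U.map_comp_assoc, ← U.map_comp_assoc]
    rw [show (e M ≫ h) ≫ m N = I.map (I.preimage (e M ≫ h ≫ m N)) by
      rw [hIu, Category.assoc]]
    rw [anat, hIu]
    rw [U'.map_comp, U'.map_comp]
    rw [← reassoc_of% (hcA M)]
  -- the components at objects in the image of `I`
  have hcI : ∀ X : D, c (I.obj X) = a.hom.app X := by
    intro X
    have hae : U.map (e (I.obj X)) ≫ a.hom.app X =
        a.hom.app (P (I.obj X)) ≫ U'.map (e (I.obj X)) := by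
      have h := anat (I.preimage (e (I.obj X)))
      rwa [I.map_preimage] at h
    rw [← cancel_epi (U.map (e (I.obj X))), ← cancel_mono (U'.map (m (I.obj X)))]
    simp only [Category.assoc]
    rw [hcB, reassoc_of% (hUem (I.obj X)), anat (f (I.obj X)), ← hU'em (I.obj X),
      reassoc_of% hae]
  -- the backward components
  have key' : ∀ M, kernel.ι (U'.map (e M)) ≫ (a.inv.app (P M) ≫ U.map (e M)) = 0 := by
    intro M
    rw [← cancel_mono (U.map (m M))]
    simp only [Category.assoc, zero_comp]
    rw [hUem M, ← anat' (f M), ← reassoc_of% (hU'em M), kernel.condition_assoc, zero_comp]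
  let c' : ∀ M : V, U'.obj M ⟶ U.obj M :=
    fun M => Abelian.epiDesc (U'.map (e M)) (a.inv.app (P M) ≫ U.map (e M)) (key' M)
  have hc'A : ∀ M, U'.map (e M) ≫ c' M = a.inv.app (P M) ≫ U.map (e M) :=
    fun M => Abelian.comp_epiDesc _ _ _
  clear_value c c'
  have hcc' : ∀ M, c M ≫ c' M = 𝟙 (U.obj M) := by
    intro M
    rw [← cancel_epi (U.map (e M)), reassoc_of% (hcA M), hc'A M,
      Iso.hom_inv_id_app_assoc, Category.comp_id]
  have hc'c : ∀ M, c' M ≫ c M = 𝟙 (U'.obj M) := by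
    intro M
    rw [← cancel_epi (U'.map (e M)), reassoc_of% (hc'A M), hcA M,
      Iso.inv_hom_id_app_assoc, Category.comp_id]
  -- the natural isomorphism
  let φ : U ≅ U' := NatIso.ofComponents (fun M => ⟨c M, c' M, hcc' M, hc'c M⟩)
    (fun h => hnat h)
  have hφapp : ∀ M, φ.hom.app M = c M := fun M => rfl
  -- monoidality
  have hmon : NatTrans.IsMonoidal φ.hom := by
    constructor
    · -- unit
      show Functor.LaxMonoidal.ε U ≫ c (𝟙_ V) = Functor.LaxMonoidal.ε U'
      have h1 := hnat (Functor.LaxMonoidal.ε I)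
      rw [hcI] at h1
      rw [← cancel_mono (U'.map (Functor.LaxMonoidal.ε I))]
      simp only [Category.assoc]
      rw [← h1]
      have h2 := NatTrans.IsMonoidal.unit (τ := a.hom)
      simp only [Functor.LaxMonoidal.comp_ε, Category.assoc] at h2
      exact h2
    · -- tensor
      intro M N
      show Functor.LaxMonoidal.μ U M N ≫ c (M ⊗ N) =
        (c M ⊗ₘ c N) ≫ Functor.LaxMonoidal.μ U' M N
      haveI : Epi (e M ⊗ₘ e N) := aux_epi_tensorHom _ _
      haveI : Epi (U.map (e M) ⊗ₘ U.map (e N)) := aux_epi_tensorHom _ _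
      have hμnat := Functor.LaxMonoidal.μ_natural U (e M) (e N)
      have hμnat' := Functor.LaxMonoidal.μ_natural U' (e M) (e N)
      have hIμ := hnat (Functor.LaxMonoidal.μ I (P M) (P N))
      rw [hcI] at hIμ
      have htens := NatTrans.IsMonoidal.tensor (τ := a.hom) (P M) (P N)
      simp only [Functor.LaxMonoidal.comp_μ, Category.assoc] at htens
      have hkey : Functor.LaxMonoidal.μ U (I.obj (P M)) (I.obj (P N)) ≫
          c (I.obj (P M) ⊗ I.obj (P N)) =
          (a.hom.app (P M) ⊗ₘ a.hom.app (P N)) ≫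
            Functor.LaxMonoidal.μ U' (I.obj (P M)) (I.obj (P N)) := by
        rw [← cancel_mono (U'.map (Functor.LaxMonoidal.μ I (P M) (P N)))]
        simp only [Category.assoc]
        rw [← hIμ]
        exact htens
      rw [← cancel_epi (U.map (e M) ⊗ₘ U.map (e N))]
      rw [reassoc_of% hμnat, hnat (e M ⊗ₘ e N), reassoc_of% hkey]
      rw [tensorHom_comp_tensorHom_assoc, hcA M, hcA N, ← tensorHom_comp_tensorHom_assoc]
      rw [hμnat']
  refine ⟨φ, ⟨hmon, ?_⟩, ?_⟩
  · intro X
    rw [hφapp, hcI X, haapp]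
    simp
  · rintro ψ ⟨hψm, hψ⟩
    apply Iso.ext
    ext M
    have hψI : ∀ X : D, ψ.hom.app (I.obj X) = a.hom.app X := by
      intro X
      rw [← cancel_mono (θ'.hom.app X), hψ X, haapp]
      simp
    rw [hφapp M, ← cancel_epi (U.map (e M)), hcA M]
    have hn := ψ.hom.naturality (e M)
    rw [hn, hψI]
end

section
/- Let 𝒟 be an additive ℂ-linear rigid symmetric monoidal category, 𝒱 a tensor category, and I : 𝒟 → 𝒱 a ℂ-linear symmetric monoidal functor satisfying assumptions (1)–(3). Then for every pre-exact additive ℂ-linear functor F : 𝒟 → 𝒜 into an abelian ℂ-linear category 𝒜, there exists a pre-exact additive functor U : 𝒱 → 𝒜 (i.e. one preserving monomorphisms and epimorphisms) together with a natural isomorphism θ : U ∘ I ≅ F. (Existence part of the pre-exact universality theorem.) -/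
/-!
STATEMENT 3 (existence part of the pre-exact universality theorem): with `I : 𝒟 ⥤ 𝒱` as
in the universality setup, every pre-exact additive `ℂ`-linear functor `F : 𝒟 ⥤ 𝒜` to an
abelian `ℂ`-linear category (pre-exact: it sends inflations, i.e. morphisms `f` with `I f`
a monomorphism, to monomorphisms, and deflations, i.e. morphisms `f` with `I f` an
epimorphism, to epimorphisms) lifts to a pre-exact additive functor `U : 𝒱 ⥤ 𝒜`
(preserving monomorphisms and epimorphisms) with `I ⋙ U ≅ F`.
-/

open CategoryTheory CategoryTheory.Limits CategoryTheory.MonoidalCategory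

universe v₁ v₂ v₃ u₁ u₂ u₃

set_option linter.unusedSectionVars false

namespace DelignePreexactAux

variable {D : Type t₁} [Category.{w₁} D]
variable {V : Type t₂} [Category.{w₂} V] [Abelian V]
variable {A : Type t₃} [Category.{w₃} A] [Abelian A]

/-- A presentation of an object of `V` as the image of `I.map f`. -/
structure Pres (I : D ⥤ V) (M : V) where
  P : D
  Q : D
  f : P ⟶ Q
  p : I.obj P ⟶ M
  m : M ⟶ I.obj Q
  hp : Epi p
  hm : Mono m
  fac : p ≫ m = I.map f

theorem pres_nonempty (I : D ⥤ V)
    (h2 : ∀ M : V, ∃ (P Q : D) (f : P ⟶ Q), Nonempty (image (I.map f) ≅ M))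
    (M : V) : Nonempty (Pres I M) := by
  obtain ⟨P, Q, f, ⟨e⟩⟩ := h2 M
  refine ⟨⟨P, Q, f, factorThruImage (I.map f) ≫ e.hom, e.inv ≫ image.ι (I.map f), ?_, ?_, ?_⟩⟩
  · exact epi_comp _ _
  · exact mono_comp _ _
  · simp

section Construction

variable (I : D ⥤ V) [I.Full] [I.Faithful] (c : ∀ M : V, Pres I M) (F : D ⥤ A)

/-- The canonical `D`-lift of a morphism of `V`, relative to the chosen presentations. -/
noncomputable def gam {M N : V} (α : M ⟶ N) : (c M).P ⟶ (c N).Q :=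
  I.preimage ((c M).p ≫ α ≫ (c N).m)

lemma I_map_gam {M N : V} (α : M ⟶ N) :
    I.map (gam I c α) = (c M).p ≫ α ≫ (c N).m :=
  I.map_preimage _

lemma preimage_pm (M : V) : I.preimage ((c M).p ≫ (c M).m) = (c M).f := by
  rw [(c M).fac, I.preimage_map]

lemma gam_id (M : V) : gam I c (𝟙 M) = (c M).f := by
  rw [gam, Category.id_comp, preimage_pm]

lemma gam_add [Preadditive D] [I.Additive] {M N : V} (α α' : M ⟶ N) :
    gam I c (α + α') = gam I c α + gam I c α' := by
  apply I.map_injective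
  rw [I.map_add, I_map_gam, I_map_gam, I_map_gam, Preadditive.add_comp, Preadditive.comp_add]

lemma pb_shift {N : V} {P₀ Z : D} {g₁ : I.obj P₀ ⟶ N} {ζ : Z ⟶ P₀} {θ : Z ⟶ (c N).P}
    (key : I.map ζ ≫ g₁ = I.map θ ≫ (c N).p) {Q' : D} (h : N ⟶ I.obj Q') :
    ζ ≫ I.preimage (g₁ ≫ h) = θ ≫ I.preimage ((c N).p ≫ h) := by
  apply I.map_injective
  rw [I.map_comp, I.map_comp, I.map_preimage, I.map_preimage, ← Category.assoc, key,
    Category.assoc]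

lemma po_shift {M : V} {Q₀ Z : D} {g₂ : M ⟶ I.obj Q₀} {χ : Q₀ ⟶ Z} {χ₁ : (c M).Q ⟶ Z}
    (key : g₂ ≫ I.map χ = (c M).m ≫ I.map χ₁) {P' : D} (h : I.obj P' ⟶ M) :
    I.preimage (h ≫ g₂) ≫ χ = I.preimage (h ≫ (c M).m) ≫ χ₁ := by
  apply I.map_injective
  rw [I.map_comp, I.map_comp, I.map_preimage, I.map_preimage, Category.assoc, Category.assoc,
    key]

/-- The pullback trick: any `V`-morphism from an `I`-object to `N` can be compared with the
chosen presentation of `N` after passing to a deflation-cover. -/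
theorem key_pb
    (hFepi : ∀ ⦃X Y : D⦄ (f : X ⟶ Y), Epi (I.map f) → Epi (F.map f))
    (h2 : ∀ M : V, ∃ (P Q : D) (f : P ⟶ Q), Nonempty (image (I.map f) ≅ M))
    {N : V} {P₀ : D} (g₁ : I.obj P₀ ⟶ N) :
    ∃ (Z : D) (ζ : Z ⟶ P₀) (θ : Z ⟶ (c N).P),
      Epi (F.map ζ) ∧ (Epi g₁ → Epi (F.map θ)) ∧ I.map ζ ≫ g₁ = I.map θ ≫ (c N).p := by
  haveI := (c N).hp
  obtain ⟨P₂, Q₂, w, ⟨e⟩⟩ := h2 (pullback g₁ (c N).p)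
  set q : I.obj P₂ ⟶ pullback g₁ (c N).p := factorThruImage (I.map w) ≫ e.hom with hq
  haveI : Epi q := epi_comp _ _
  refine ⟨P₂, I.preimage (q ≫ pullback.fst g₁ (c N).p),
    I.preimage (q ≫ pullback.snd g₁ (c N).p), ?_, ?_, ?_⟩
  · exact hFepi _ (by rw [I.map_preimage]; exact epi_comp _ _)
  · intro hg₁
    haveI := hg₁
    exact hFepi _ (by rw [I.map_preimage]; exact epi_comp _ _)
  · simp only [I.map_preimage, Category.assoc, pullback.condition]

/-- The pushout trick: any `V`-morphism from `M` to an `I`-object can be compared with the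
chosen presentation of `M` after passing to an inflation-hull. -/
theorem key_po
    (hFmono : ∀ ⦃X Y : D⦄ (f : X ⟶ Y), Mono (I.map f) → Mono (F.map f))
    (h2 : ∀ M : V, ∃ (P Q : D) (f : P ⟶ Q), Nonempty (image (I.map f) ≅ M))
    {M : V} {Q₀ : D} (g₂ : M ⟶ I.obj Q₀) :
    ∃ (Z : D) (χ : Q₀ ⟶ Z) (χ₁ : (c M).Q ⟶ Z),
      Mono (F.map χ) ∧ (Mono g₂ → Mono (F.map χ₁)) ∧ g₂ ≫ I.map χ = (c M).m ≫ I.map χ₁ := by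
  haveI := (c M).hm
  obtain ⟨P₃, Q₃, w, ⟨e⟩⟩ := h2 (pushout (c M).m g₂)
  set n : pushout (c M).m g₂ ⟶ I.obj Q₃ := e.inv ≫ image.ι (I.map w) with hn
  haveI : Mono n := mono_comp _ _
  refine ⟨Q₃, I.preimage (pushout.inr (c M).m g₂ ≫ n),
    I.preimage (pushout.inl (c M).m g₂ ≫ n), ?_, ?_, ?_⟩
  · exact hFmono _ (by rw [I.map_preimage]; exact mono_comp _ _)
  · intro hg₂
    haveI := hg₂
    exact hFmono _ (by rw [I.map_preimage]; exact mono_comp _ _)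
  · simp only [I.map_preimage, pushout.condition_assoc]

/-- Key lemma (image condition): `F (gam α)` dies in the cokernel of `F f_N`. -/
theorem gam_coker
    (hFepi : ∀ ⦃X Y : D⦄ (f : X ⟶ Y), Epi (I.map f) → Epi (F.map f))
    (h2 : ∀ M : V, ∃ (P Q : D) (f : P ⟶ Q), Nonempty (image (I.map f) ≅ M))
    {M N : V} (α : M ⟶ N) :
    F.map (gam I c α) ≫ cokernel.π (F.map (c N).f) = 0 := by
  obtain ⟨Z, ζ, θ, hζ, -, key⟩ := key_pb I c F hFepi h2 ((c M).p ≫ α)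
  have hA : ζ ≫ gam I c α = θ ≫ (c N).f := by
    have h1 := pb_shift I c key ((c N).m)
    simp only [Category.assoc] at h1
    rw [preimage_pm] at h1
    exact h1
  haveI := hζ
  apply zero_of_epi_comp (F.map ζ)
  rw [← Category.assoc, ← F.map_comp, hA, F.map_comp, Category.assoc, cokernel.condition,
    comp_zero]

/-- Key lemma (kernel condition): `F (gam α)` kills the kernel of `F f_M`. -/
theorem gam_ker
    (hFmono : ∀ ⦃X Y : D⦄ (f : X ⟶ Y), Mono (I.map f) → Mono (F.map f))
    (h2 : ∀ M : V, ∃ (P Q : D) (f : P ⟶ Q), Nonempty (image (I.map f) ≅ M))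
    {M N : V} (α : M ⟶ N) :
    kernel.ι (F.map (c M).f) ≫ F.map (gam I c α) = 0 := by
  obtain ⟨Z, χ, χ₁, hχ, -, key⟩ := key_po I c F hFmono h2 (α ≫ (c N).m)
  have hA : gam I c α ≫ χ = (c M).f ≫ χ₁ := by
    have h1 := po_shift I c key ((c M).p)
    rw [preimage_pm] at h1
    exact h1
  haveI := hχ
  apply zero_of_comp_mono (F.map χ)
  rw [Category.assoc, ← F.map_comp, hA, F.map_comp, ← Category.assoc, kernel.condition,
    zero_comp]

/-- The object part of the lifted functor. -/
noncomputable abbrev Uobj (M : V) : A := Abelian.image (F.map (c M).f)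

noncomputable abbrev eps (M : V) : F.obj (c M).P ⟶ Uobj I c F M :=
  Abelian.factorThruImage (F.map (c M).f)

noncomputable abbrev mu (M : V) : Uobj I c F M ⟶ F.obj (c M).Q :=
  Abelian.image.ι (F.map (c M).f)

lemma eps_mu (M : V) : eps I c F M ≫ mu I c F M = F.map (c M).f :=
  Abelian.image.fac _

section Umap

variable (hFmono : ∀ ⦃X Y : D⦄ (f : X ⟶ Y), Mono (I.map f) → Mono (F.map f))
variable (hFepi : ∀ ⦃X Y : D⦄ (f : X ⟶ Y), Epi (I.map f) → Epi (F.map f))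
variable (h2 : ∀ M : V, ∃ (P Q : D) (f : P ⟶ Q), Nonempty (image (I.map f) ≅ M))

/-- The morphism part of the lifted functor. -/
noncomputable def Umap {M N : V} (α : M ⟶ N) : Uobj I c F M ⟶ Uobj I c F N :=
  Abelian.epiDesc (eps I c F M)
    (kernel.lift (cokernel.π (F.map (c N).f)) (F.map (gam I c α))
      (gam_coker I c F hFepi h2 α))
    (by
      rw [← cancel_mono (mu I c F N), Category.assoc, zero_comp]
      show kernel.ι (eps I c F M) ≫
        kernel.lift (cokernel.π (F.map (c N).f)) (F.map (gam I c α)) _ ≫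
          kernel.ι (cokernel.π (F.map (c N).f)) = 0
      rw [kernel.lift_ι]
      have h0 : kernel.ι (eps I c F M) ≫ F.map (c M).f = 0 := by
        rw [← eps_mu, ← Category.assoc, kernel.condition, zero_comp]
      rw [← kernel.lift_ι (F.map (c M).f) (kernel.ι (eps I c F M)) h0, Category.assoc,
        gam_ker I c F hFmono h2 α, comp_zero])

lemma Umap_fac {M N : V} (α : M ⟶ N) :
    eps I c F M ≫ Umap I c F hFmono hFepi h2 α ≫ mu I c F N = F.map (gam I c α) := by
  rw [← Category.assoc]
  show (eps I c F M ≫ Abelian.epiDesc _ _ _) ≫ mu I c F N = _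
  rw [Abelian.comp_epiDesc]
  exact kernel.lift_ι _ _ _

lemma Umap_unique {M N : V} (α : M ⟶ N) (u : Uobj I c F M ⟶ Uobj I c F N)
    (hu : eps I c F M ≫ u ≫ mu I c F N = F.map (gam I c α)) :
    u = Umap I c F hFmono hFepi h2 α := by
  have h2' := Umap_fac I c F hFmono hFepi h2 α
  rw [← cancel_mono (mu I c F N), ← cancel_epi (eps I c F M)]
  rw [hu, h2']

lemma Umap_pb_compat {M N : V} (α : M ⟶ N) {Z : D} {ζ : Z ⟶ (c M).P} {θ : Z ⟶ (c N).P}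
    (key : I.map ζ ≫ ((c M).p ≫ α) = I.map θ ≫ (c N).p) :
    F.map ζ ≫ eps I c F M ≫ Umap I c F hFmono hFepi h2 α = F.map θ ≫ eps I c F N := by
  have hA : ζ ≫ gam I c α = θ ≫ (c N).f := by
    have h1 := pb_shift I c key ((c N).m)
    simp only [Category.assoc] at h1
    rw [preimage_pm] at h1
    exact h1
  rw [← cancel_mono (mu I c F N)]
  simp only [Category.assoc]
  rw [Umap_fac, eps_mu, ← F.map_comp, ← F.map_comp, hA]

end Umap

section Functor

variable [Preadditive D] [I.Additive] [F.Additive]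
variable (hFmono : ∀ ⦃X Y : D⦄ (f : X ⟶ Y), Mono (I.map f) → Mono (F.map f))
variable (hFepi : ∀ ⦃X Y : D⦄ (f : X ⟶ Y), Epi (I.map f) → Epi (F.map f))
variable (h2 : ∀ M : V, ∃ (P Q : D) (f : P ⟶ Q), Nonempty (image (I.map f) ≅ M))

/-- The lifted functor `U : V ⥤ A`. -/
noncomputable def Ufun : V ⥤ A where
  obj M := Uobj I c F M
  map {M N} α := Umap I c F hFmono hFepi h2 α
  map_id M := by
    refine (Umap_unique I c F hFmono hFepi h2 (𝟙 M) (𝟙 _) ?_).symm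
    rw [gam_id, Category.id_comp, eps_mu]
  map_comp {M N O} α β := by
    refine (Umap_unique I c F hFmono hFepi h2 (α ≫ β)
      (Umap I c F hFmono hFepi h2 α ≫ Umap I c F hFmono hFepi h2 β) ?_).symm
    obtain ⟨Z, ζ, θ, hζ, -, key⟩ := key_pb I c F hFepi h2 ((c M).p ≫ α)
    haveI := hζ
    have hB : ζ ≫ gam I c (α ≫ β) = θ ≫ gam I c β := by
      have h1 := pb_shift I c key (β ≫ (c O).m)
      simp only [gam, Category.assoc] at h1 ⊢
      exact h1
    have hA' := Umap_pb_compat I c F hFmono hFepi h2 α key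
    rw [← cancel_epi (F.map ζ)]
    calc F.map ζ ≫ eps I c F M ≫
          (Umap I c F hFmono hFepi h2 α ≫ Umap I c F hFmono hFepi h2 β) ≫ mu I c F O
        = (F.map ζ ≫ eps I c F M ≫ Umap I c F hFmono hFepi h2 α) ≫
            Umap I c F hFmono hFepi h2 β ≫ mu I c F O := by simp only [Category.assoc]
      _ = (F.map θ ≫ eps I c F N) ≫
            Umap I c F hFmono hFepi h2 β ≫ mu I c F O := by rw [hA']
      _ = F.map θ ≫ F.map (gam I c β) := by
            simp only [Category.assoc]; rw [Umap_fac]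
      _ = F.map (ζ ≫ gam I c (α ≫ β)) := by rw [← F.map_comp, ← hB]
      _ = F.map ζ ≫ F.map (gam I c (α ≫ β)) := F.map_comp _ _

lemma Ufun_additive : (Ufun I c F hFmono hFepi h2).Additive := by
  constructor
  intro M N α α'
  refine (Umap_unique I c F hFmono hFepi h2 (α + α')
    (Umap I c F hFmono hFepi h2 α + Umap I c F hFmono hFepi h2 α') ?_).symm
  rw [Preadditive.add_comp, Preadditive.comp_add, Umap_fac, Umap_fac, ← F.map_add, gam_add]

lemma Ufun_mono {M N : V} (α : M ⟶ N) (hα : Mono α) :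
    Mono ((Ufun I c F hFmono hFepi h2).map α) := by
  haveI := hα
  haveI := (c N).hm
  apply Preadditive.mono_of_cancel_zero
  intro W u hu
  change W ⟶ Uobj I c F M at u
  obtain ⟨Z, χ, χ₁, hχ, hχ₁, key⟩ := key_po I c F hFmono h2 (α ≫ (c N).m)
  haveI := hχ
  haveI := hχ₁ (mono_comp _ _)
  have hkey : gam I c α ≫ χ = (c M).f ≫ χ₁ := by
    have h1 := po_shift I c key ((c M).p)
    rw [preimage_pm] at h1
    exact h1
  have h2' : pullback.snd u (eps I c F M) ≫ F.map (gam I c α) = 0 := by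
    rw [← Umap_fac I c F hFmono hFepi h2 α, ← Category.assoc, ← pullback.condition,
      Category.assoc]
    have hu' : u ≫ Umap I c F hFmono hFepi h2 α = 0 := hu
    rw [← Category.assoc u, hu', zero_comp, comp_zero]
  have h3 : pullback.snd u (eps I c F M) ≫ F.map ((c M).f) = 0 := by
    apply zero_of_comp_mono (F.map χ₁)
    rw [Category.assoc, ← F.map_comp, ← hkey, F.map_comp, ← Category.assoc, h2', zero_comp]
  have h4 : pullback.fst u (eps I c F M) ≫ u = 0 := by
    rw [pullback.condition]
    apply zero_of_comp_mono (mu I c F M)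
    rw [Category.assoc, eps_mu]
    exact h3
  exact zero_of_epi_comp (pullback.fst u (eps I c F M)) h4

lemma Ufun_epi {M N : V} (α : M ⟶ N) (hα : Epi α) :
    Epi ((Ufun I c F hFmono hFepi h2).map α) := by
  haveI := hα
  haveI := (c M).hp
  apply Preadditive.epi_of_cancel_zero
  intro W u hu
  change Uobj I c F N ⟶ W at u
  obtain ⟨Z, ζ, θ, hζ, hθ, key⟩ := key_pb I c F hFepi h2 ((c M).p ≫ α)
  haveI := hζ
  haveI := hθ (epi_comp _ _)
  have hA' := Umap_pb_compat I c F hFmono hFepi h2 α key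
  have h5 : (F.map θ ≫ eps I c F N) ≫ u = 0 := by
    have hcong := congrArg (fun t => t ≫ u) hA'
    simp only [Category.assoc] at hcong
    have hu' : Umap I c F hFmono hFepi h2 α ≫ u = 0 := hu
    rw [Category.assoc, ← hcong, hu', comp_zero, comp_zero]
  haveI : Epi (F.map θ ≫ eps I c F N) := epi_comp _ _
  exact zero_of_epi_comp (F.map θ ≫ eps I c F N) h5

section Iso

noncomputable def p0 (X : D) : (c (I.obj X)).P ⟶ X := I.preimage (c (I.obj X)).p

noncomputable def m0 (X : D) : X ⟶ (c (I.obj X)).Q := I.preimage (c (I.obj X)).m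

lemma p0_m0 (X : D) : p0 I c X ≫ m0 I c X = (c (I.obj X)).f := by
  apply I.map_injective
  rw [I.map_comp, p0, m0, I.map_preimage, I.map_preimage, (c (I.obj X)).fac]

include hFepi in
lemma Fp0_epi (X : D) : Epi (F.map (p0 I c X)) :=
  hFepi _ (by rw [p0, I.map_preimage]; exact (c (I.obj X)).hp)

include hFmono in
lemma Fm0_mono (X : D) : Mono (F.map (m0 I c X)) :=
  hFmono _ (by rw [m0, I.map_preimage]; exact (c (I.obj X)).hm)

noncomputable def thetaHom (X : D) : Uobj I c F (I.obj X) ⟶ F.obj X :=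
  Abelian.epiDesc (eps I c F (I.obj X)) (F.map (p0 I c X))
    (by
      haveI := Fm0_mono I c F hFmono X
      apply zero_of_comp_mono (F.map (m0 I c X))
      rw [Category.assoc, ← F.map_comp, p0_m0, ← eps_mu, ← Category.assoc,
        kernel.condition, zero_comp])

noncomputable def thetaInv (X : D) : F.obj X ⟶ Uobj I c F (I.obj X) :=
  kernel.lift (cokernel.π (F.map (c (I.obj X)).f)) (F.map (m0 I c X))
    (by
      haveI := Fp0_epi I c F hFepi X
      apply zero_of_epi_comp (F.map (p0 I c X))
      rw [← Category.assoc, ← F.map_comp, p0_m0, cokernel.condition])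

lemma eps_thetaHom (X : D) :
    eps I c F (I.obj X) ≫ thetaHom I c F hFmono X = F.map (p0 I c X) :=
  Abelian.comp_epiDesc _ _ _

lemma thetaInv_mu (X : D) :
    thetaInv I c F hFepi X ≫ mu I c F (I.obj X) = F.map (m0 I c X) :=
  kernel.lift_ι _ _ _

lemma thetaHom_mu (X : D) :
    thetaHom I c F hFmono X ≫ F.map (m0 I c X) = mu I c F (I.obj X) := by
  rw [← cancel_epi (eps I c F (I.obj X)), ← Category.assoc, eps_thetaHom, ← F.map_comp,
    p0_m0, eps_mu]

lemma theta_hom_inv (X : D) :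
    thetaHom I c F hFmono X ≫ thetaInv I c F hFepi X = 𝟙 _ := by
  rw [← cancel_mono (mu I c F (I.obj X)), ← cancel_epi (eps I c F (I.obj X))]
  simp only [Category.assoc]
  rw [thetaInv_mu, thetaHom_mu, Category.id_comp]

lemma theta_inv_hom (X : D) :
    thetaInv I c F hFepi X ≫ thetaHom I c F hFmono X = 𝟙 _ := by
  haveI : Epi (thetaHom I c F hFmono X) := by
    have h := eps_thetaHom I c F hFmono X
    haveI := Fp0_epi I c F hFepi X
    haveI : Epi (eps I c F (I.obj X) ≫ thetaHom I c F hFmono X) := by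
      rw [h]; infer_instance
    exact epi_of_epi (eps I c F (I.obj X)) (thetaHom I c F hFmono X)
  rw [← cancel_epi (thetaHom I c F hFmono X), ← Category.assoc,
    theta_hom_inv I c F hFmono hFepi X, Category.id_comp, Category.comp_id]

lemma gam_Imap {X Y : D} (u : X ⟶ Y) :
    gam I c (I.map u) = p0 I c X ≫ u ≫ m0 I c Y := by
  apply I.map_injective
  rw [I_map_gam, I.map_comp, I.map_comp, p0, m0, I.map_preimage, I.map_preimage]

lemma theta_nat {X Y : D} (u : X ⟶ Y) :
    Umap I c F hFmono hFepi h2 (I.map u) ≫ thetaHom I c F hFmono Y =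
      thetaHom I c F hFmono X ≫ F.map u := by
  haveI := Fm0_mono I c F hFmono Y
  rw [← cancel_mono (F.map (m0 I c Y)), ← cancel_epi (eps I c F (I.obj X))]
  simp only [Category.assoc]
  rw [thetaHom_mu, Umap_fac, ← Category.assoc, eps_thetaHom, ← F.map_comp,
    ← F.map_comp, gam_Imap]

end Iso

/-- The natural isomorphism `I ⋙ U ≅ F`. -/
noncomputable def UfunIso : I ⋙ Ufun I c F hFmono hFepi h2 ≅ F :=
  NatIso.ofComponents
    (fun X => ⟨thetaHom I c F hFmono X, thetaInv I c F hFepi X,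
      theta_hom_inv I c F hFmono hFepi X, theta_inv_hom I c F hFmono hFepi X⟩)
    (fun {X Y} u => theta_nat I c F hFmono hFepi h2 u)

end Functor

end Construction

end DelignePreexactAux


theorem deligne_preexact_universality_existence
    {D : Type u₁} [Category.{v₁} D] [Preadditive D] [CategoryTheory.Linear ℂ D]
    [HasFiniteBiproducts D] [MonoidalCategory D] [SymmetricCategory D]
    [MonoidalPreadditive D] [MonoidalLinear ℂ D] [RigidCategory D]
    {V : Type u₂} [Category.{v₂} V] [Abelian V] [CategoryTheory.Linear ℂ V]
    [MonoidalCategory V] [SymmetricCategory V] [MonoidalPreadditive V]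
    [MonoidalLinear ℂ V] [RigidCategory V]
    (hV : Function.Bijective fun c : ℂ => c • (𝟙 (𝟙_ V)))
    (I : D ⥤ V) [I.Braided] [I.Additive] [I.Linear ℂ] [I.Full] [I.Faithful]
    (h2 : ∀ M : V, ∃ (P Q : D) (f : P ⟶ Q), Nonempty (image (I.map f) ≅ M))
    (h3e : ∀ ⦃X Y : V⦄ (g : X ⟶ Y), Epi g →
      ∃ T : D, ¬ IsZero T ∧ IsSplitEpi (g ▷ I.obj T))
    (h3m : ∀ ⦃X Y : V⦄ (g : X ⟶ Y), Mono g →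
      ∃ T : D, ¬ IsZero T ∧ IsSplitMono (g ▷ I.obj T))
    {A : Type u₃} [Category.{v₃} A] [Abelian A] [CategoryTheory.Linear ℂ A]
    (F : D ⥤ A) [F.Additive] [F.Linear ℂ]
    (hFmono : ∀ ⦃X Y : D⦄ (f : X ⟶ Y), Mono (I.map f) → Mono (F.map f))
    (hFepi : ∀ ⦃X Y : D⦄ (f : X ⟶ Y), Epi (I.map f) → Epi (F.map f)) :
    ∃ U : V ⥤ A, U.Additive ∧
      (∀ ⦃X Y : V⦄ (g : X ⟶ Y), Mono g → Mono (U.map g)) ∧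
      (∀ ⦃X Y : V⦄ (g : X ⟶ Y), Epi g → Epi (U.map g)) ∧
      Nonempty (I ⋙ U ≅ F) := by
  classical
  let c : ∀ M : V, DelignePreexactAux.Pres I M :=
    fun M => (DelignePreexactAux.pres_nonempty I h2 M).some
  exact ⟨DelignePreexactAux.Ufun I c F hFmono hFepi h2,
    DelignePreexactAux.Ufun_additive I c F hFmono hFepi h2,
    fun X Y g hg => DelignePreexactAux.Ufun_mono I c F hFmono hFepi h2 g hg,
    fun X Y g hg => DelignePreexactAux.Ufun_epi I c F hFmono hFepi h2 g hg,
    ⟨DelignePreexactAux.UfunIso I c F hFmono hFepi h2⟩⟩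
end

section
/- Let 𝒟 be an additive ℂ-linear rigid symmetric monoidal category, 𝒱 a tensor category, and I : 𝒟 → 𝒱 a ℂ-linear symmetric monoidal functor satisfying assumptions (1)–(3). Let F : 𝒟 → 𝒜 be a pre-exact additive ℂ-linear functor into an abelian ℂ-linear category 𝒜. If (U, θ) and (U′, θ′) are two pairs consisting of a pre-exact functor 𝒱 → 𝒜 and a natural isomorphism θ : U ∘ I ≅ F (resp. θ′ : U′ ∘ I ≅ F), then there exists a unique natural isomorphism φ : U ≅ U′ such that θ′_X ∘ φ_{I(X)} = θ_X for every object X of 𝒟. (Uniqueness part of the pre-exact universality theorem: the groupoid of pre-exact lifts is contractible.) -/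
/-!
STATEMENT 4 (uniqueness part of the pre-exact universality theorem): with `I : 𝒟 ⥤ 𝒱` as
in the universality setup and `F : 𝒟 ⥤ 𝒜` a pre-exact additive `ℂ`-linear functor to an
abelian `ℂ`-linear category, any two pre-exact lifts `(U, θ)`, `(U′, θ′)` of `F` along `I`
are related by a unique natural isomorphism `φ : U ≅ U′` with `θ′_X ∘ φ_{I X} = θ_X`.
-/

open CategoryTheory CategoryTheory.Limits CategoryTheory.MonoidalCategory

universe v₁ v₂ v₃ u₁ u₂ u₃

theorem deligne_preexact_universality_uniqueness
    {D : Type u₁} [Category.{v₁} D] [Preadditive D] [CategoryTheory.Linear ℂ D]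
    [HasFiniteBiproducts D] [MonoidalCategory D] [SymmetricCategory D]
    [MonoidalPreadditive D] [MonoidalLinear ℂ D] [RigidCategory D]
    {V : Type u₂} [Category.{v₂} V] [Abelian V] [CategoryTheory.Linear ℂ V]
    [MonoidalCategory V] [SymmetricCategory V] [MonoidalPreadditive V]
    [MonoidalLinear ℂ V] [RigidCategory V]
    (hV : Function.Bijective fun c : ℂ => c • (𝟙 (𝟙_ V)))
    (I : D ⥤ V) [I.Braided] [I.Additive] [I.Linear ℂ] [I.Full] [I.Faithful]
    (h2 : ∀ M : V, ∃ (P Q : D) (f : P ⟶ Q), Nonempty (image (I.map f) ≅ M))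
    (h3e : ∀ ⦃X Y : V⦄ (g : X ⟶ Y), Epi g →
      ∃ T : D, ¬ IsZero T ∧ IsSplitEpi (g ▷ I.obj T))
    (h3m : ∀ ⦃X Y : V⦄ (g : X ⟶ Y), Mono g →
      ∃ T : D, ¬ IsZero T ∧ IsSplitMono (g ▷ I.obj T))
    {A : Type u₃} [Category.{v₃} A] [Abelian A] [CategoryTheory.Linear ℂ A]
    (F : D ⥤ A) [F.Additive] [F.Linear ℂ]
    (hFmono : ∀ ⦃X Y : D⦄ (f : X ⟶ Y), Mono (I.map f) → Mono (F.map f))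
    (hFepi : ∀ ⦃X Y : D⦄ (f : X ⟶ Y), Epi (I.map f) → Epi (F.map f))
    (U : V ⥤ A) [U.Additive]
    (hUmono : ∀ ⦃X Y : V⦄ (g : X ⟶ Y), Mono g → Mono (U.map g))
    (hUepi : ∀ ⦃X Y : V⦄ (g : X ⟶ Y), Epi g → Epi (U.map g))
    (U' : V ⥤ A) [U'.Additive]
    (hU'mono : ∀ ⦃X Y : V⦄ (g : X ⟶ Y), Mono g → Mono (U'.map g))
    (hU'epi : ∀ ⦃X Y : V⦄ (g : X ⟶ Y), Epi g → Epi (U'.map g))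
    (θ : I ⋙ U ≅ F) (θ' : I ⋙ U' ≅ F) :
    ∃! φ : U ≅ U',
      ∀ X : D, φ.hom.app (I.obj X) ≫ θ'.hom.app X = θ.hom.app X := by
  classical
  choose P Q f hf using h2
  -- comparison transformation on the image of I
  let ψ : I ⋙ U ⟶ I ⋙ U' := θ.hom ≫ θ'.inv
  have hψ : ∀ X : D, ψ.app X = θ.hom.app X ≫ θ'.inv.app X := fun X => rfl
  -- presentation data for each object M of V (made opaque via `choose`)
  have pres : ∀ M : V, ∃ (e : I.obj (P M) ⟶ M) (m : M ⟶ I.obj (Q M)),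
      Epi e ∧ Mono m ∧ e ≫ m = I.map (f M) := by
    intro M
    obtain ⟨w⟩ := hf M
    refine ⟨factorThruImage (I.map (f M)) ≫ w.hom, w.inv ≫ image.ι (I.map (f M)),
      epi_comp _ _, mono_comp _ _, ?_⟩
    simp [image.fac]
  choose e m he hm hem using pres
  have hUe : ∀ M, Epi (U.map (e M)) := fun M => hUepi _ (he M)
  have hU'm : ∀ M, Mono (U'.map (m M)) := fun M => hU'mono _ (hm M)
  -- naturality of ψ along morphisms of D
  have hψnat : ∀ {X Y : D} (g : X ⟶ Y),
      U.map (I.map g) ≫ ψ.app Y = ψ.app X ≫ U'.map (I.map g) := by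
    intro X Y g
    simpa using ψ.naturality g
  -- construct the component of φ at M
  have key : ∀ M, kernel.ι (U.map (e M)) ≫ (ψ.app (P M) ≫ U'.map (e M)) = 0 := by
    intro M
    haveI := hU'm M
    rw [← cancel_mono (U'.map (m M)), zero_comp]
    calc (kernel.ι (U.map (e M)) ≫ ψ.app (P M) ≫ U'.map (e M)) ≫ U'.map (m M)
        = kernel.ι (U.map (e M)) ≫ ψ.app (P M) ≫ U'.map (I.map (f M)) := by
          rw [Category.assoc, Category.assoc, ← U'.map_comp, hem M]
      _ = kernel.ι (U.map (e M)) ≫ U.map (I.map (f M)) ≫ ψ.app (Q M) := by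
          rw [← hψnat (f M)]
      _ = (kernel.ι (U.map (e M)) ≫ U.map (e M)) ≫ U.map (m M) ≫ ψ.app (Q M) := by
          rw [← hem M, U.map_comp]; simp only [Category.assoc]
      _ = 0 := by rw [kernel.condition, zero_comp]
  let φapp : ∀ M : V, U.obj M ⟶ U'.obj M := fun M =>
    haveI := hUe M
    Abelian.epiDesc (U.map (e M)) (ψ.app (P M) ≫ U'.map (e M)) (key M)
  have hφe : ∀ M, U.map (e M) ≫ φapp M = ψ.app (P M) ≫ U'.map (e M) := fun M => by
    haveI := hUe M
    exact Abelian.comp_epiDesc _ _ _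
  have hφm : ∀ M, φapp M ≫ U'.map (m M) = U.map (m M) ≫ ψ.app (Q M) := by
    intro M
    haveI := hUe M
    rw [← cancel_epi (U.map (e M))]
    calc U.map (e M) ≫ φapp M ≫ U'.map (m M)
        = (U.map (e M) ≫ φapp M) ≫ U'.map (m M) := (Category.assoc _ _ _).symm
      _ = (ψ.app (P M) ≫ U'.map (e M)) ≫ U'.map (m M) := by rw [hφe M]
      _ = ψ.app (P M) ≫ U'.map (I.map (f M)) := by
          rw [Category.assoc, ← U'.map_comp, hem M]
      _ = U.map (I.map (f M)) ≫ ψ.app (Q M) := (hψnat _).symm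
      _ = U.map (e M ≫ m M) ≫ ψ.app (Q M) := by rw [hem M]
      _ = U.map (e M) ≫ U.map (m M) ≫ ψ.app (Q M) := by
          rw [U.map_comp, Category.assoc]
  -- general compatibility: φ agrees with ψ against any morphism out of an object I X
  have hgen : ∀ (X : D) (M : V) (g : I.obj X ⟶ M),
      U.map g ≫ φapp M = ψ.app X ≫ U'.map g := by
    intro X M g
    haveI := hU'm M
    rw [← cancel_mono (U'.map (m M))]
    have hh : I.map (I.preimage (g ≫ m M)) = g ≫ m M := I.map_preimage _
    calc (U.map g ≫ φapp M) ≫ U'.map (m M)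
        = U.map g ≫ U.map (m M) ≫ ψ.app (Q M) := by
          rw [Category.assoc, hφm M]
      _ = U.map (g ≫ m M) ≫ ψ.app (Q M) := by rw [U.map_comp, Category.assoc]
      _ = U.map (I.map (I.preimage (g ≫ m M))) ≫ ψ.app (Q M) := by rw [hh]
      _ = ψ.app X ≫ U'.map (I.map (I.preimage (g ≫ m M))) := hψnat _
      _ = ψ.app X ≫ U'.map (g ≫ m M) := by rw [hh]
      _ = (ψ.app X ≫ U'.map g) ≫ U'.map (m M) := by
          rw [U'.map_comp, Category.assoc]
  -- φ agrees with ψ on objects coming from D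
  have hφI : ∀ X : D, φapp (I.obj X) = ψ.app X := by
    intro X
    have := hgen X (I.obj X) (𝟙 _)
    simpa using this
  -- naturality of φ
  have hnatur : ∀ {M N : V} (g : M ⟶ N), U.map g ≫ φapp N = φapp M ≫ U'.map g := by
    intro M N g
    haveI := hUe M
    rw [← cancel_epi (U.map (e M))]
    calc U.map (e M) ≫ U.map g ≫ φapp N
        = U.map (e M ≫ g) ≫ φapp N := by rw [U.map_comp, Category.assoc]
      _ = ψ.app (P M) ≫ U'.map (e M ≫ g) := hgen _ _ _
      _ = ψ.app (P M) ≫ U'.map (e M) ≫ U'.map g := by rw [U'.map_comp]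
      _ = (ψ.app (P M) ≫ U'.map (e M)) ≫ U'.map g := (Category.assoc _ _ _).symm
      _ = (U.map (e M) ≫ φapp M) ≫ U'.map g := by rw [hφe M]
      _ = U.map (e M) ≫ φapp M ≫ U'.map g := Category.assoc _ _ _
  -- each component is an isomorphism
  have hiso : ∀ M, IsIso (φapp M) := by
    intro M
    have hepi : Epi (φapp M) := by
      haveI := hUe M
      haveI := hU'epi _ (he M)
      have : Epi (U.map (e M) ≫ φapp M) := by
        rw [hφe M]; exact epi_comp _ _
      exact epi_of_epi (U.map (e M)) (φapp M)
    have hmono : Mono (φapp M) := by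
      haveI := hU'm M
      haveI := hUmono _ (hm M)
      have : Mono (φapp M ≫ U'.map (m M)) := by
        rw [hφm M]; exact mono_comp _ _
      exact mono_of_mono (φapp M) (U'.map (m M))
    exact isIso_of_mono_of_epi _
  let φ : U ≅ U' := NatIso.ofComponents
    (fun M => haveI := hiso M; asIso (φapp M)) (fun g => hnatur g)
  refine ⟨φ, ?_, ?_⟩
  · intro X
    have h0 : φ.hom.app (I.obj X) = φapp (I.obj X) := rfl
    rw [h0, hφI X, hψ X, Category.assoc, θ'.inv_hom_id_app, Category.comp_id]
  · intro φ' hφ'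
    have hI : ∀ X : D, φ'.hom.app (I.obj X) = ψ.app X := by
      intro X
      rw [hψ X, ← hφ' X, Category.assoc]
      simp
    have happ : ∀ M : V, φ'.hom.app M = φapp M := by
      intro M
      haveI := hUe M
      rw [← cancel_epi (U.map (e M)), φ'.hom.naturality (e M), hI (P M), ← hφe M]
    apply Iso.ext
    apply NatTrans.ext
    funext M
    exact happ M
end

section
/- Let 𝒟 be an additive ℂ-linear rigid symmetric monoidal category, 𝒱 a tensor category, and I : 𝒟 → 𝒱 a ℂ-linear symmetric monoidal functor satisfying assumptions (1)–(3). Let F : 𝒟 → 𝒜 be a faithful symmetric monoidal functor into a tensor category 𝒜, and let (U, θ) and (U′, θ′) be pairs consisting of an exact symmetric monoidal functor 𝒱 → 𝒜 and a monoidal natural isomorphism to F of the composite with I. Then every natural isomorphism φ : U ≅ U′ of the underlying functors satisfying θ′_X ∘ φ_{I(X)} = θ_X for all objects X of 𝒟 is automatically a monoidal natural transformation. (Full faithfulness part of the comparison between symmetric monoidal lifts and pre-exact lifts.) -/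
/-!
STATEMENT 5 (full faithfulness part of the comparison between SM lifts and pre-exact
lifts): with `I : 𝒟 ⥤ 𝒱` as in the universality setup, `F : 𝒟 ⥤ 𝒜` a faithful symmetric
monoidal functor to a tensor category `𝒜`, and `(U, θ)`, `(U′, θ′)` two exact symmetric
monoidal lifts of `F` along `I`, every natural isomorphism `φ : U ≅ U′` of underlying
functors satisfying `θ′_X ∘ φ_{I X} = θ_X` for all `X : 𝒟` is automatically monoidal.
-/

open CategoryTheory CategoryTheory.Limits CategoryTheory.MonoidalCategory

universe v₁ v₂ v₃ u₁ u₂ u₃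

theorem deligne_comparison_full_faithfulness
    {D : Type u₁} [Category.{v₁} D] [Preadditive D] [CategoryTheory.Linear ℂ D]
    [HasFiniteBiproducts D] [MonoidalCategory D] [SymmetricCategory D]
    [MonoidalPreadditive D] [MonoidalLinear ℂ D] [RigidCategory D]
    {V : Type u₂} [Category.{v₂} V] [Abelian V] [CategoryTheory.Linear ℂ V]
    [MonoidalCategory V] [SymmetricCategory V] [MonoidalPreadditive V]
    [MonoidalLinear ℂ V] [RigidCategory V]
    (hV : Function.Bijective fun c : ℂ => c • (𝟙 (𝟙_ V)))
    (I : D ⥤ V) [I.Braided] [I.Additive] [I.Linear ℂ] [I.Full] [I.Faithful]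
    (h2 : ∀ M : V, ∃ (P Q : D) (f : P ⟶ Q), Nonempty (image (I.map f) ≅ M))
    (h3e : ∀ ⦃X Y : V⦄ (g : X ⟶ Y), Epi g →
      ∃ T : D, ¬ IsZero T ∧ IsSplitEpi (g ▷ I.obj T))
    (h3m : ∀ ⦃X Y : V⦄ (g : X ⟶ Y), Mono g →
      ∃ T : D, ¬ IsZero T ∧ IsSplitMono (g ▷ I.obj T))
    {A : Type u₃} [Category.{v₃} A] [Abelian A] [CategoryTheory.Linear ℂ A]
    [MonoidalCategory A] [SymmetricCategory A] [MonoidalPreadditive A]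
    [MonoidalLinear ℂ A] [RigidCategory A]
    (hA : Function.Bijective fun c : ℂ => c • (𝟙 (𝟙_ A)))
    (F : D ⥤ A) [F.Braided] [F.Faithful]
    (U : V ⥤ A) [U.Braided] [PreservesFiniteLimits U] [PreservesFiniteColimits U]
    (U' : V ⥤ A) [U'.Braided] [PreservesFiniteLimits U'] [PreservesFiniteColimits U']
    (θ : I ⋙ U ≅ F) [NatTrans.IsMonoidal θ.hom]
    (θ' : I ⋙ U' ≅ F) [NatTrans.IsMonoidal θ'.hom]
    (φ : U ≅ U')
    (hφ : ∀ X : D, φ.hom.app (I.obj X) ≫ θ'.hom.app X = θ.hom.app X) :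
    NatTrans.IsMonoidal φ.hom := by
  open Functor.LaxMonoidal in
  -- In the rigid category `A`, whiskering preserves epimorphisms.
  have hwhiskR : ∀ {Z W : A} (g : Z ⟶ W) (T : A), Epi g → Epi (g ▷ T) := by
    intro Z W g T hg
    letI : (tensorRight T).IsLeftAdjoint := ⟨tensorRight Tᘁ, ⟨tensorRightAdjunction T Tᘁ⟩⟩
    have : Epi ((tensorRight T).map g) := inferInstance
    simpa using this
  have hwhiskL : ∀ {Z W : A} (g : Z ⟶ W) (T : A), Epi g → Epi (T ◁ g) := by
    intro Z W g T hg
    letI : (tensorLeft T).IsLeftAdjoint := ⟨tensorLeft (ᘁT), ⟨tensorLeftAdjunction (ᘁT) T⟩⟩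
    have : Epi ((tensorLeft T).map g) := inferInstance
    simpa using this
  -- the key base case: the tensor compatibility holds on objects of the form `I.obj P ⊗ I.obj Q`
  have key : ∀ P Q : D, μ U (I.obj P) (I.obj Q) ≫ φ.hom.app (I.obj P ⊗ I.obj Q) =
      (φ.hom.app (I.obj P) ⊗ₘ φ.hom.app (I.obj Q)) ≫ μ U' (I.obj P) (I.obj Q) := by
    intro P Q
    have h1 : μ U (I.obj P) (I.obj Q) ≫ U.map (μ I P Q) ≫ θ.hom.app (P ⊗ Q) =
        (θ.hom.app P ⊗ₘ θ.hom.app Q) ≫ μ F P Q := by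
      have := NatTrans.IsMonoidal.tensor (τ := θ.hom) P Q
      rw [comp_μ] at this
      simpa using this
    have h1' : μ U' (I.obj P) (I.obj Q) ≫ U'.map (μ I P Q) ≫ θ'.hom.app (P ⊗ Q) =
        (θ'.hom.app P ⊗ₘ θ'.hom.app Q) ≫ μ F P Q := by
      have := NatTrans.IsMonoidal.tensor (τ := θ'.hom) P Q
      rw [comp_μ] at this
      simpa using this
    rw [← cancel_mono (U'.map (μ I P Q) ≫ θ'.hom.app (P ⊗ Q))]
    have hnat : φ.hom.app (I.obj P ⊗ I.obj Q) ≫ U'.map (μ I P Q) =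
        U.map (μ I P Q) ≫ φ.hom.app (I.obj (P ⊗ Q)) := (φ.hom.naturality (μ I P Q)).symm
    calc (μ U (I.obj P) (I.obj Q) ≫ φ.hom.app (I.obj P ⊗ I.obj Q)) ≫
          U'.map (μ I P Q) ≫ θ'.hom.app (P ⊗ Q)
        = μ U (I.obj P) (I.obj Q) ≫ U.map (μ I P Q) ≫
            φ.hom.app (I.obj (P ⊗ Q)) ≫ θ'.hom.app (P ⊗ Q) := by
          rw [Category.assoc, ← Category.assoc (φ.hom.app _), hnat]; simp
      _ = μ U (I.obj P) (I.obj Q) ≫ U.map (μ I P Q) ≫ θ.hom.app (P ⊗ Q) := by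
          rw [hφ]
      _ = (θ.hom.app P ⊗ₘ θ.hom.app Q) ≫ μ F P Q := h1
      _ = ((φ.hom.app (I.obj P) ≫ θ'.hom.app P) ⊗ₘ
            (φ.hom.app (I.obj Q) ≫ θ'.hom.app Q)) ≫ μ F P Q := by rw [hφ, hφ]
      _ = (φ.hom.app (I.obj P) ⊗ₘ φ.hom.app (I.obj Q)) ≫
            (θ'.hom.app P ⊗ₘ θ'.hom.app Q) ≫ μ F P Q := by
          rw [← tensorHom_comp_tensorHom, Category.assoc]
      _ = ((φ.hom.app (I.obj P) ⊗ₘ φ.hom.app (I.obj Q)) ≫ μ U' (I.obj P) (I.obj Q)) ≫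
            U'.map (μ I P Q) ≫ θ'.hom.app (P ⊗ Q) := by
          rw [← h1']; simp
  -- every object of `V` receives an epimorphism from some `I.obj P`
  have surj : ∀ X : V, ∃ (P : D) (p : I.obj P ⟶ X), Epi p := by
    intro X
    obtain ⟨P, Q, f, ⟨e⟩⟩ := h2 X
    exact ⟨P, factorThruImage (I.map f) ≫ e.hom, epi_comp _ _⟩
  constructor
  · -- unit compatibility
    have hu : ε U ≫ U.map (ε I) ≫ θ.hom.app (𝟙_ D) = ε F := by
      have := NatTrans.IsMonoidal.unit (τ := θ.hom)
      rw [comp_ε] at this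
      simpa using this
    have hu' : ε U' ≫ U'.map (ε I) ≫ θ'.hom.app (𝟙_ D) = ε F := by
      have := NatTrans.IsMonoidal.unit (τ := θ'.hom)
      rw [comp_ε] at this
      simpa using this
    rw [← cancel_mono (U'.map (ε I) ≫ θ'.hom.app (𝟙_ D))]
    have hnat : φ.hom.app (𝟙_ V) ≫ U'.map (ε I) =
        U.map (ε I) ≫ φ.hom.app (I.obj (𝟙_ D)) := (φ.hom.naturality (ε I)).symm
    calc (ε U ≫ φ.hom.app (𝟙_ V)) ≫ U'.map (ε I) ≫ θ'.hom.app (𝟙_ D)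
        = ε U ≫ U.map (ε I) ≫ φ.hom.app (I.obj (𝟙_ D)) ≫ θ'.hom.app (𝟙_ D) := by
          rw [Category.assoc, ← Category.assoc (φ.hom.app _), hnat]; simp
      _ = ε U ≫ U.map (ε I) ≫ θ.hom.app (𝟙_ D) := by rw [hφ]
      _ = ε F := hu
      _ = ε U' ≫ U'.map (ε I) ≫ θ'.hom.app (𝟙_ D) := hu'.symm
  · -- tensor compatibility
    intro X Y
    obtain ⟨P, p, hp⟩ := surj X
    obtain ⟨Q, q, hq⟩ := surj Y
    haveI : Epi p := hp
    haveI : Epi q := hq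
    haveI : Epi (U.map p) := U.map_epi p
    haveI : Epi (U.map q) := U.map_epi q
    have hepi : Epi (U.map p ⊗ₘ U.map q) := by
      rw [MonoidalCategory.tensorHom_def]
      exact @epi_comp _ _ _ _ _ _ (hwhiskR _ _ inferInstance) _ (hwhiskL _ _ inferInstance)
    rw [← cancel_epi (U.map p ⊗ₘ U.map q)]
    have hμ : (U.map p ⊗ₘ U.map q) ≫ μ U X Y =
        μ U (I.obj P) (I.obj Q) ≫ U.map (p ⊗ₘ q) := μ_natural U p q
    have hμ' : (U'.map p ⊗ₘ U'.map q) ≫ μ U' X Y =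
        μ U' (I.obj P) (I.obj Q) ≫ U'.map (p ⊗ₘ q) := μ_natural U' p q
    calc (U.map p ⊗ₘ U.map q) ≫ μ U X Y ≫ φ.hom.app (X ⊗ Y)
        = μ U (I.obj P) (I.obj Q) ≫ U.map (p ⊗ₘ q) ≫ φ.hom.app (X ⊗ Y) := by
          rw [← Category.assoc, hμ, Category.assoc]
      _ = μ U (I.obj P) (I.obj Q) ≫ φ.hom.app (I.obj P ⊗ I.obj Q) ≫ U'.map (p ⊗ₘ q) := by
          rw [φ.hom.naturality]
      _ = ((φ.hom.app (I.obj P) ⊗ₘ φ.hom.app (I.obj Q)) ≫ μ U' (I.obj P) (I.obj Q)) ≫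
            U'.map (p ⊗ₘ q) := by rw [← Category.assoc, key]
      _ = (φ.hom.app (I.obj P) ⊗ₘ φ.hom.app (I.obj Q)) ≫ (U'.map p ⊗ₘ U'.map q) ≫ μ U' X Y := by
          rw [Category.assoc, hμ']
      _ = ((U.map p ≫ φ.hom.app X) ⊗ₘ (U.map q ≫ φ.hom.app Y)) ≫ μ U' X Y := by
          rw [← Category.assoc, tensorHom_comp_tensorHom, φ.hom.naturality, φ.hom.naturality]
      _ = (U.map p ⊗ₘ U.map q) ≫ (φ.hom.app X ⊗ₘ φ.hom.app Y) ≫ μ U' X Y := by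
          rw [← tensorHom_comp_tensorHom, Category.assoc]
end

section
/- Let 𝒟 be an additive ℂ-linear rigid symmetric monoidal category, 𝒱 a tensor category, and I : 𝒟 → 𝒱 a ℂ-linear symmetric monoidal functor satisfying assumptions (1)–(3). Then every faithful symmetric monoidal functor F : 𝒟 → 𝒜 into a tensor category 𝒜 is pre-exact: if f is a morphism of 𝒟 such that I(f) is an epimorphism in 𝒱, then F(f) is an epimorphism in 𝒜, and if I(f) is a monomorphism in 𝒱, then F(f) is a monomorphism in 𝒜. -/
set_option maxHeartbeats 1000000

open CategoryTheory CategoryTheory.Limits CategoryTheory.MonoidalCategory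

universe v₁ v₂ v₃ u₁ u₂ u₃

noncomputable section DeligneAux

namespace DeligneAux

variable {C : Type u₁} [Category.{v₁} C] [MonoidalCategory C]

section Whisk

variable [BraidedCategory C]

lemma epi_whiskerRight' {X Y : C} (f : X ⟶ Y) [Epi f] (Z : C) [HasRightDual Z] :
    Epi (f ▷ Z) := by
  have : (tensorRight Z).PreservesEpimorphisms :=
    Functor.preservesEpimorphisms_of_adjunction (tensorRightAdjunction Z (Zᘁ))
  simpa using (tensorRight Z).map_epi f

lemma mono_whiskerRight' {X Y : C} (f : X ⟶ Y) [Mono f] (Z : C) [HasRightDual Z] :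
    Mono (f ▷ Z) := by
  letI : ExactPairing (Zᘁ) Z := BraidedCategory.exactPairing_swap Z (Zᘁ)
  have : (tensorRight Z).PreservesMonomorphisms :=
    Functor.preservesMonomorphisms_of_adjunction (tensorRightAdjunction (Zᘁ) Z)
  simpa using (tensorRight Z).map_mono f

lemma epi_whiskerLeft' (X : C) [HasRightDual X] {Y Z : C} (f : Y ⟶ Z) [Epi f] :
    Epi (X ◁ f) := by
  letI : ExactPairing (Xᘁ) X := BraidedCategory.exactPairing_swap X (Xᘁ)
  have : (tensorLeft X).PreservesEpimorphisms :=
    Functor.preservesEpimorphisms_of_adjunction (tensorLeftAdjunction (Xᘁ) X)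
  simpa using (tensorLeft X).map_epi f

lemma mono_whiskerLeft' (X : C) [HasRightDual X] {Y Z : C} (f : Y ⟶ Z) [Mono f] :
    Mono (X ◁ f) := by
  have : (tensorLeft X).PreservesMonomorphisms :=
    Functor.preservesMonomorphisms_of_adjunction (tensorLeftAdjunction X (Xᘁ))
  simpa using (tensorLeft X).map_mono f

end Whisk

section ZeroLemmas

variable [Preadditive C] [MonoidalPreadditive C]

lemma isZero_tensorLeft {X : C} (hX : IsZero X) (Y : C) : IsZero (X ⊗ Y) := by
  rw [IsZero.iff_id_eq_zero]
  have h : (𝟙 X : X ⟶ X) = 0 := hX.eq_of_src _ _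
  calc 𝟙 (X ⊗ Y) = (𝟙 X) ▷ Y := by simp
    _ = (0 : X ⟶ X) ▷ Y := by rw [h]
    _ = 0 := by simp

lemma isZero_tensorRight (X : C) {Y : C} (hY : IsZero Y) : IsZero (X ⊗ Y) := by
  rw [IsZero.iff_id_eq_zero]
  have h : (𝟙 Y : Y ⟶ Y) = 0 := hY.eq_of_src _ _
  calc 𝟙 (X ⊗ Y) = X ◁ (𝟙 Y) := by simp
    _ = X ◁ (0 : Y ⟶ Y) := by rw [h]
    _ = 0 := by simp

lemma isZero_of_mono_eq_zero {X Y : C} (f : X ⟶ Y) [Mono f] (h : f = 0) : IsZero X := by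
  rw [IsZero.iff_id_eq_zero]
  have : 𝟙 X ≫ f = 0 ≫ f := by simp [h]
  exact (cancel_mono f).mp this

lemma isZero_of_mono_into_zero {X Y : C} (f : X ⟶ Y) [Mono f] (hY : IsZero Y) : IsZero X :=
  isZero_of_mono_eq_zero f (hY.eq_of_tgt _ _)

/-- In a pairing, if one side is zero so is the other. -/
lemma isZero_of_exactPairing_right (X Y : C) [ExactPairing X Y] (hY : IsZero Y) : IsZero X := by
  rw [IsZero.iff_id_eq_zero]
  have hη : (η_ X Y : 𝟙_ C ⟶ X ⊗ Y) = 0 := (isZero_tensorRight X hY).eq_of_tgt _ _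
  have := ExactPairing.evaluation_coevaluation (X := X) (Y := Y)
  rw [hη] at this
  simp only [MonoidalPreadditive.zero_whiskerRight, Limits.zero_comp] at this
  calc 𝟙 X = (λ_ X).inv ≫ ((λ_ X).hom ≫ (ρ_ X).inv) ≫ (ρ_ X).hom := by simp
    _ = (λ_ X).inv ≫ (0 : 𝟙_ C ⊗ X ⟶ X ⊗ 𝟙_ C) ≫ (ρ_ X).hom := by rw [this]
    _ = 0 := by simp

lemma isZero_of_exactPairing_left (X Y : C) [ExactPairing X Y] (hX : IsZero X) : IsZero Y := by
  rw [IsZero.iff_id_eq_zero]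
  have hη : (η_ X Y : 𝟙_ C ⟶ X ⊗ Y) = 0 := (isZero_tensorLeft hX Y).eq_of_tgt _ _
  have := ExactPairing.coevaluation_evaluation (X := X) (Y := Y)
  rw [hη] at this
  simp only [MonoidalPreadditive.whiskerLeft_zero, Limits.zero_comp] at this
  calc 𝟙 Y = (ρ_ Y).inv ≫ ((ρ_ Y).hom ≫ (λ_ Y).inv) ≫ (λ_ Y).hom := by simp
    _ = (ρ_ Y).inv ≫ (0 : Y ⊗ 𝟙_ C ⟶ 𝟙_ C ⊗ Y) ≫ (λ_ Y).hom := by rw [this]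
    _ = 0 := by simp

end ZeroLemmas

section T4

variable [Preadditive C] [MonoidalPreadditive C] [BraidedCategory C]

/-- Transfer `IsZero` across a tensor product of pairings. -/
lemma isZero_pairing_tensor (X Y X' Y' : C) [ExactPairing X Y] [ExactPairing X' Y']
    (h : IsZero (X ⊗ X')) : IsZero (Y' ⊗ Y) := by
  -- middle object
  set P₁ : C := Y' ⊗ (X' ⊗ Y') with hP₁
  set B : C := P₁ ⊗ (Y ⊗ (X ⊗ Y)) with hB
  -- B is zero
  have z2 : IsZero ((X ⊗ X') ⊗ Y) := isZero_tensorLeft h Y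
  have z3 : IsZero ((X' ⊗ X) ⊗ Y) :=
    z2.of_iso (whiskerRightIso (β_ X' X) Y)
  have z4 : IsZero (X' ⊗ (X ⊗ Y)) := z3.of_iso (α_ X' X Y).symm
  have z5 : IsZero ((Y' ⊗ Y) ⊗ (X' ⊗ (X ⊗ Y))) := isZero_tensorRight _ z4
  have t1 : IsZero (((Y' ⊗ Y) ⊗ X') ⊗ (X ⊗ Y)) := z5.of_iso (α_ (Y' ⊗ Y) X' (X ⊗ Y))
  have t2 : IsZero ((X' ⊗ (Y' ⊗ Y)) ⊗ (X ⊗ Y)) :=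
    t1.of_iso (whiskerRightIso (β_ X' (Y' ⊗ Y)) (X ⊗ Y))
  have t3 : IsZero (X' ⊗ ((Y' ⊗ Y) ⊗ (X ⊗ Y))) := t2.of_iso (α_ X' (Y' ⊗ Y) (X ⊗ Y)).symm
  have t4 : IsZero (X' ⊗ (Y' ⊗ (Y ⊗ (X ⊗ Y)))) :=
    t3.of_iso (whiskerLeftIso X' (α_ Y' Y (X ⊗ Y)).symm)
  have t5 : IsZero (Y' ⊗ (X' ⊗ (Y' ⊗ (Y ⊗ (X ⊗ Y))))) := isZero_tensorRight _ t4
  have hBzero : IsZero B :=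
    t5.of_iso ((α_ Y' (X' ⊗ Y') (Y ⊗ (X ⊗ Y))) ≪≫
      whiskerLeftIso Y' (α_ X' Y' (Y ⊗ (X ⊗ Y))))
  -- snake insertions
  set insY' : Y' ⟶ Y' ⊗ (X' ⊗ Y') := (ρ_ Y').inv ≫ (Y' ◁ η_ X' Y') with hins'
  set evY' : Y' ⊗ (X' ⊗ Y') ⟶ Y' := (α_ Y' X' Y').inv ≫ (ε_ X' Y' ▷ Y') ≫ (λ_ Y').hom with hev'
  set insY : Y ⟶ Y ⊗ (X ⊗ Y) := (ρ_ Y).inv ≫ (Y ◁ η_ X Y) with hins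
  set evY : Y ⊗ (X ⊗ Y) ⟶ Y := (α_ Y X Y).inv ≫ (ε_ X Y ▷ Y) ≫ (λ_ Y).hom with hev
  have hsnake' : insY' ≫ evY' = 𝟙 Y' := by
    simp [hins', hev', ExactPairing.coevaluation_evaluation_assoc]
  have hsnake : insY ≫ evY = 𝟙 Y := by
    simp [hins, hev, ExactPairing.coevaluation_evaluation_assoc]
  have key : 𝟙 (Y' ⊗ Y) =
      (insY' ▷ Y) ≫ (P₁ ◁ insY) ≫ (P₁ ◁ evY) ≫ (evY' ▷ Y) := by
    rw [← MonoidalCategory.whiskerLeft_comp_assoc, hsnake]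
    simp only [MonoidalCategory.whiskerLeft_id, Category.id_comp]
    rw [← comp_whiskerRight, hsnake']
    simp
  have hmid : (P₁ ◁ insY) ≫ (P₁ ◁ evY) = 0 := by
    have h1 : (P₁ ◁ insY) ≫ (𝟙 B) ≫ (P₁ ◁ evY) = (P₁ ◁ insY) ≫ (P₁ ◁ evY) :=
      congrArg (fun k => (P₁ ◁ insY) ≫ k) (Category.id_comp (P₁ ◁ evY))
    have h2 : (𝟙 B : B ⟶ B) = 0 := hBzero.eq_of_src _ _
    rw [← h1, h2]
    simp
  rw [IsZero.iff_id_eq_zero, key,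
    ← Category.assoc (P₁ ◁ insY) (P₁ ◁ evY) (evY' ▷ Y), hmid]
  simp

end T4

section Simple

variable [Abelian C] [MonoidalPreadditive C] [SymmetricCategory C] [RigidCategory C]

lemma comp_iso_zero {X Y Z : C} {f : X ⟶ Y} {g : Y ⟶ Z} [IsIso g] (h : f ≫ g = 0) : f = 0 := by
  calc f = (f ≫ g) ≫ inv g := by simp
    _ = 0 := by rw [h]; simp

@[simp]
lemma rightAdjointMate_zero {X Y : C} [HasRightDual X] [HasRightDual Y] :
    ((0 : X ⟶ Y)ᘁ) = 0 := by
  simp [rightAdjointMate]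

lemma mate_to_unit {U : C} (u : U ⟶ 𝟙_ C) :
    (uᘁ : 𝟙_ C ⟶ (Uᘁ)) = η_ U (Uᘁ) ≫ (u ▷ (Uᘁ)) ≫ (λ_ (Uᘁ)).hom := by
  dsimp only [rightAdjointMate]
  change (ρ_ (𝟙_ C)).inv ≫ ((𝟙_ C) ◁ η_ U (Uᘁ)) ≫ ((𝟙_ C) ◁ (u ▷ (Uᘁ))) ≫
      (α_ (𝟙_ C) (𝟙_ C) (Uᘁ)).inv ≫ ((ρ_ (𝟙_ C)).hom ▷ (Uᘁ)) ≫ (λ_ (Uᘁ)).hom = _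
  simp only [MonoidalCategory.id_whiskerLeft, Category.assoc]
  monoidal

/-- The unit object is simple: any mono into it from a nonzero object is iso. -/
theorem unit_simple [CategoryTheory.Linear ℂ C]
    (hC : Function.Bijective fun c : ℂ => c • (𝟙 (𝟙_ C)))
    {U : C} (u : U ⟶ 𝟙_ C) [Mono u] (hU : ¬ IsZero U) : IsIso u := by
  classical
  have hmono_uw : Mono (u ▷ (Uᘁ)) := mono_whiskerRight' u _
  set R : C := kernel (uᘁ : 𝟙_ C ⟶ (Uᘁ)) with hRdef
  set ι : R ⟶ 𝟙_ C := kernel.ι (uᘁ : 𝟙_ C ⟶ (Uᘁ)) with hιdef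
  have hι0 : ι ≫ (uᘁ : 𝟙_ C ⟶ (Uᘁ)) = 0 := kernel.condition _
  -- ι kills the coevaluation of U
  have hιη : ι ≫ η_ U (Uᘁ) = 0 := by
    have h1 : ι ≫ η_ U (Uᘁ) ≫ (u ▷ (Uᘁ)) ≫ (λ_ (Uᘁ)).hom = 0 := by
      rw [← mate_to_unit u]; exact hι0
    have h2 : (ι ≫ η_ U (Uᘁ) ≫ (u ▷ (Uᘁ))) ≫ (λ_ (Uᘁ)).hom = 0 := by
      simpa using h1
    have h3 : (ι ≫ η_ U (Uᘁ)) ≫ (u ▷ (Uᘁ)) = 0 := by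
      have := comp_iso_zero (g := (λ_ (Uᘁ)).hom) h2
      simpa using this
    have h4 : (ι ≫ η_ U (Uᘁ)) ≫ (u ▷ (Uᘁ)) = 0 ≫ (u ▷ (Uᘁ)) := by
      rw [h3]; simp
    exact (cancel_mono _).mp h4
  -- whiskered vanishing
  have hUι : (Uᘁ) ◁ ι = 0 := by
    have snake := ExactPairing.coevaluation_evaluation (X := U) (Y := Uᘁ)
    have h1 : ((Uᘁ) ◁ ι) ≫ (ρ_ (Uᘁ)).hom ≫ (λ_ (Uᘁ)).inv
        = ((Uᘁ) ◁ (ι ≫ η_ U (Uᘁ))) ≫ (α_ _ _ _).inv ≫ (ε_ U (Uᘁ) ▷ (Uᘁ)) := by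
      rw [MonoidalCategory.whiskerLeft_comp]
      rw [Category.assoc, snake]
    rw [hιη] at h1
    simp only [MonoidalPreadditive.whiskerLeft_zero, Limits.zero_comp] at h1
    have h1' : ((Uᘁ) ◁ ι) ≫ ((ρ_ (Uᘁ)).hom ≫ (λ_ (Uᘁ)).inv) = 0 := by
      rw [← Category.assoc] at h1 ⊢
      simpa using h1
    exact comp_iso_zero h1'
  have hιU : ι ▷ (Uᘁ) = 0 := by
    have hnat := BraidedCategory.braiding_naturality_left ι (Uᘁ)
    rw [hUι] at hnat
    simp only [Limits.comp_zero] at hnat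
    have : (ι ▷ (Uᘁ)) = (ι ▷ (Uᘁ)) ≫ (β_ (𝟙_ C) (Uᘁ)).hom ≫ (β_ (𝟙_ C) (Uᘁ)).inv := by simp
    rw [this, ← Category.assoc, hnat]
    simp
  have hRU' : IsZero (R ⊗ (Uᘁ)) := by
    have : Mono (ι ▷ (Uᘁ)) := mono_whiskerRight' ι _
    exact isZero_of_mono_eq_zero _ hιU
  -- the candidate direct sum decomposition
  set φ : (U ⊞ R) ⟶ 𝟙_ C := biprod.desc u ι with hφdef
  -- φ is epi
  have hEpiφ : Epi φ := by
    set Cc : C := cokernel φ with hCc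
    set π : 𝟙_ C ⟶ Cc := cokernel.π φ with hπdef
    have huπ : u ≫ π = 0 := by
      have h := cokernel.condition φ
      calc u ≫ π = biprod.inl ≫ φ ≫ π := by simp [hφdef]
        _ = 0 := by rw [h]; simp
    have hιπ : ι ≫ π = 0 := by
      have h := cokernel.condition φ
      calc ι ≫ π = biprod.inr ≫ φ ≫ π := by simp [hφdef]
        _ = 0 := by rw [h]; simp
    set πm : (Ccᘁ) ⟶ 𝟙_ C := rightAdjointMate π with hπm
    have hmate : πm ≫ (uᘁ : 𝟙_ C ⟶ (Uᘁ)) = 0 := by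
      have h5 := comp_rightAdjointMate (f := u) (g := π)
      rw [huπ] at h5
      rw [hπm, ← h5]
      simp
    set t : (Ccᘁ) ⟶ R := kernel.lift _ πm hmate with htdef
    have ht : t ≫ ι = πm := kernel.lift_ι _ _ _
    have hrecon : η_ Cc (Ccᘁ) ≫ (Cc ◁ πm) ≫ (ρ_ Cc).hom = π := by
      have h := coevaluation_comp_rightAdjointMate (f := π)
      rw [hπm, ← Category.assoc, h]
      have hηu : (η_ (𝟙_ C) ((𝟙_ C)ᘁ) : 𝟙_ C ⟶ _) = (ρ_ (𝟙_ C)).inv := rfl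
      rw [hηu, Category.assoc]
      show (ρ_ (𝟙_ C)).inv ≫ π ▷ (𝟙_ C) ≫ (ρ_ Cc).hom = π
      rw [MonoidalCategory.rightUnitor_naturality]
      simp
    -- B' lemma : Cc ⊗ R is zero
    have hB1 : (R ◁ π) ≫ (ι ▷ Cc) = 0 := by
      rw [whisker_exchange]
      calc ι ▷ 𝟙_ C ≫ 𝟙_ C ◁ π
          = ι ▷ 𝟙_ C ≫ ((𝟙_ C ◁ π) ≫ (λ_ Cc).hom) ≫ (λ_ Cc).inv := by simp
        _ = ι ▷ 𝟙_ C ≫ ((λ_ (𝟙_ C)).hom ≫ π) ≫ (λ_ Cc).inv := by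
            rw [MonoidalCategory.leftUnitor_naturality]
        _ = (ι ▷ 𝟙_ C ≫ (ρ_ (𝟙_ C)).hom) ≫ π ≫ (λ_ Cc).inv := by
            rw [← unitors_equal]; simp
        _ = ((ρ_ R).hom ≫ ι) ≫ π ≫ (λ_ Cc).inv := by
            rw [MonoidalCategory.rightUnitor_naturality]
        _ = (ρ_ R).hom ≫ (ι ≫ π) ≫ (λ_ Cc).inv := by simp
        _ = 0 := by rw [hιπ]; simp
    have hEpiRπ : Epi (R ◁ π) := epi_whiskerLeft' R π
    have hιCc : ι ▷ Cc = 0 := zero_of_epi_comp (R ◁ π) hB1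
    have hRCc : IsZero (R ⊗ Cc) := by
      have : Mono (ι ▷ Cc) := mono_whiskerRight' ι _
      exact isZero_of_mono_eq_zero _ hιCc
    have hCcR : IsZero (Cc ⊗ R) := hRCc.of_iso (β_ Cc R)
    have hπ0 : π = 0 := by
      rw [← hrecon, ← ht, MonoidalCategory.whiskerLeft_comp]
      have hz : (Cc ◁ ι : Cc ⊗ R ⟶ Cc ⊗ 𝟙_ C) = 0 := hCcR.eq_of_src _ _
      rw [hz]
      simp
    refine Preadditive.epi_of_cancel_zero _ (fun {W} g hg => ?_)
    have : g = π ≫ cokernel.desc φ g hg := (cokernel.π_desc φ g hg).symm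
    rw [this, hπ0, Limits.zero_comp]
  -- φ is mono
  have hMonoφ : Mono φ := by
    refine Preadditive.mono_of_cancel_zero _ (fun {W} w hw => ?_)
    set w₁ : W ⟶ U := w ≫ biprod.fst with hw₁
    set w₂ : W ⟶ R := w ≫ biprod.snd with hw₂
    have hwsum : w = w₁ ≫ biprod.inl + w₂ ≫ biprod.inr := by
      rw [hw₁, hw₂]
      simp only [Category.assoc, ← Preadditive.comp_add]
      rw [biprod.total]
      simp
    have ha : w₁ ≫ u + w₂ ≫ ι = 0 := by
      have : (w₁ ≫ biprod.inl + w₂ ≫ biprod.inr) ≫ φ = 0 := by rw [← hwsum]; exact hw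
      simpa [hφdef, Preadditive.add_comp] using this
    set a : W ⟶ 𝟙_ C := w₁ ≫ u with hadef
    have ha2 : (-w₂) ≫ ι = a := by
      have h := eq_neg_of_add_eq_zero_left ha
      rw [Preadditive.neg_comp, ← h]
    set P : C := image a with hPdef
    set m : P ⟶ 𝟙_ C := image.ι a with hmdef
    set e : W ⟶ P := factorThruImage a with hedef
    set F₁ : MonoFactorisation a := { I := U, m := u, e := w₁, fac := hadef.symm } with hF₁
    set F₂ : MonoFactorisation a := { I := R, m := ι, e := -w₂, fac := ha2 } with hF₂
    set p₁ : P ⟶ U := image.lift F₁ with hp₁def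
    set p₂ : P ⟶ R := image.lift F₂ with hp₂def
    have hp₁ : p₁ ≫ u = m := image.lift_fac F₁
    have hp₂ : p₂ ≫ ι = m := image.lift_fac F₂
    have hmono_p₁ : Mono p₁ := by
      have : Mono (p₁ ≫ u) := by rw [hp₁]; infer_instance
      exact mono_of_mono p₁ u
    have hmono_p₂ : Mono p₂ := by
      have : Mono (p₂ ≫ ι) := by rw [hp₂]; infer_instance
      exact mono_of_mono p₂ ι
    have hPU' : IsZero (P ⊗ (Uᘁ)) := by
      have : Mono (p₂ ▷ (Uᘁ)) := mono_whiskerRight' p₂ _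
      exact isZero_of_mono_into_zero (p₂ ▷ (Uᘁ)) hRU'
    letI : ExactPairing (Uᘁ) U := BraidedCategory.exactPairing_swap U (Uᘁ)
    have hUP' : IsZero (U ⊗ (Pᘁ)) := isZero_pairing_tensor P (Pᘁ) (Uᘁ) U hPU'
    have hPU2 : IsZero ((Pᘁ) ⊗ U) := hUP'.of_iso (β_ (Pᘁ) U)
    have hPP : IsZero ((Pᘁ) ⊗ P) := by
      have : Mono ((Pᘁ) ◁ p₁) := mono_whiskerLeft' _ p₁
      exact isZero_of_mono_into_zero ((Pᘁ) ◁ p₁) hPU2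
    have hPzero : IsZero P := by
      have hε : (ε_ P (Pᘁ) : (Pᘁ) ⊗ P ⟶ 𝟙_ C) = 0 := hPP.eq_of_src _ _
      rw [IsZero.iff_id_eq_zero]
      have snake := ExactPairing.evaluation_coevaluation (X := P) (Y := Pᘁ)
      rw [hε] at snake
      simp only [MonoidalPreadditive.whiskerLeft_zero, Limits.comp_zero] at snake
      calc 𝟙 P = (λ_ P).inv ≫ ((λ_ P).hom ≫ (ρ_ P).inv) ≫ (ρ_ P).hom := by simp
        _ = (λ_ P).inv ≫ (0 : 𝟙_ C ⊗ P ⟶ P ⊗ 𝟙_ C) ≫ (ρ_ P).hom := by rw [← snake]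
        _ = 0 := by simp
    have hm0 : m = 0 := hPzero.eq_of_src _ _
    have ha0 : a = 0 := by
      rw [← image.fac a, ← hmdef, ← hedef, hm0, Limits.comp_zero]
    have hw₁0 : w₁ = 0 := by
      have h : w₁ ≫ u = 0 ≫ u := by
        rw [← hadef, ha0]; simp
      exact (cancel_mono u).mp h
    have hw₂0 : w₂ = 0 := by
      have h1 : w₂ ≫ ι = 0 := by
        have h := ha
        rw [ha0, zero_add] at h
        exact h
      have h2 : w₂ ≫ ι = 0 ≫ ι := by rw [h1]; simp
      exact (cancel_mono ι).mp h2
    rw [hwsum, hw₁0, hw₂0]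
    simp
  have hIsoφ : IsIso φ := isIso_of_mono_of_epi φ
  -- idempotent argument
  set e₀ : 𝟙_ C ⟶ 𝟙_ C := inv φ ≫ biprod.fst ≫ biprod.inl ≫ φ with he₀def
  have he₀ : e₀ ≫ e₀ = e₀ := by
    rw [he₀def]
    simp only [Category.assoc, IsIso.hom_inv_id_assoc]
    rw [biprod.inl_fst_assoc]
  obtain ⟨c, hc0'⟩ := hC.2 e₀
  have hc : c • 𝟙 (𝟙_ C) = e₀ := hc0'
  have hcc : c * c = c := by
    apply hC.1
    have h1 : e₀ ≫ e₀ = e₀ := he₀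
    rw [← hc] at h1
    simpa [Linear.smul_comp, Linear.comp_smul, smul_smul] using h1
  have hcases : c = 0 ∨ c = 1 := by
    have h : c * (c - 1) = 0 := by rw [mul_sub, hcc, mul_one, sub_self]
    rcases mul_eq_zero.mp h with h0 | h1
    · exact Or.inl h0
    · exact Or.inr (sub_eq_zero.mp h1)
  rcases hcases with hc0 | hc1
  · exfalso
    apply hU
    have he0 : e₀ = 0 := by rw [← hc, hc0, zero_smul]
    have h1 : (biprod.fst ≫ biprod.inl : (U ⊞ R) ⟶ (U ⊞ R)) ≫ φ = 0 := by
      have : φ ≫ e₀ = biprod.fst ≫ biprod.inl ≫ φ := by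
        rw [he₀def]
        simp
      rw [he0, Limits.comp_zero] at this
      rw [Category.assoc, ← this]
    have h2 : (biprod.fst ≫ biprod.inl : (U ⊞ R) ⟶ (U ⊞ R)) = 0 := by
      have h3 : (biprod.fst ≫ biprod.inl : (U ⊞ R) ⟶ (U ⊞ R)) ≫ φ = 0 ≫ φ := by
        rw [h1]; simp
      exact (cancel_mono φ).mp h3
    rw [IsZero.iff_id_eq_zero]
    calc 𝟙 U = ((biprod.inl : U ⟶ U ⊞ R) ≫ biprod.fst) ≫ ((biprod.inl : U ⟶ U ⊞ R) ≫ biprod.fst) := by simp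
      _ = (biprod.inl : U ⟶ U ⊞ R) ≫ (biprod.fst ≫ biprod.inl) ≫ biprod.fst := by simp
      _ = 0 := by rw [h2]; simp
  · -- c = 1 : R is zero, u is epi
    have he1 : e₀ = 𝟙 (𝟙_ C) := by rw [← hc, hc1, one_smul]
    have h1 : (biprod.fst ≫ biprod.inl : (U ⊞ R) ⟶ (U ⊞ R)) ≫ φ = 𝟙 _ ≫ φ := by
      have : φ ≫ e₀ = biprod.fst ≫ biprod.inl ≫ φ := by
        rw [he₀def]
        simp
      rw [he1, Category.comp_id] at this
      simpa using this.symm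
    have h2 : (biprod.fst ≫ biprod.inl : (U ⊞ R) ⟶ (U ⊞ R)) = 𝟙 _ := (cancel_mono φ).mp h1
    have hRzero : IsZero R := by
      rw [IsZero.iff_id_eq_zero]
      calc 𝟙 R = (biprod.inr : R ⟶ U ⊞ R) ≫ biprod.snd := by simp
        _ = (biprod.inr : R ⟶ U ⊞ R) ≫ 𝟙 (U ⊞ R) ≫ biprod.snd := by simp
        _ = (biprod.inr : R ⟶ U ⊞ R) ≫ (biprod.fst ≫ biprod.inl) ≫ biprod.snd := by rw [h2]
        _ = 0 := by simp
    have hι0' : ι = 0 := hRzero.eq_of_src _ _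
    have hEpiu : Epi u := by
      refine Preadditive.epi_of_cancel_zero _ (fun {W} g hg => ?_)
      have hφg : φ ≫ g = 0 := by
        apply biprod.hom_ext'
        · simpa [hφdef] using hg
        · simp [hφdef, hι0']
      exact zero_of_epi_comp φ hφg
    exact isIso_of_mono_of_epi u

theorem isZero_of_tensor_zero [CategoryTheory.Linear ℂ C]
    (hC : Function.Bijective fun c : ℂ => c • (𝟙 (𝟙_ C)))
    {Z : C} (hZ : ¬ IsZero Z) {U : C} (u : U ⟶ 𝟙_ C) [Mono u]
    (hUZ : IsZero (U ⊗ Z)) : IsZero U := by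
  by_contra hU
  have : IsIso u := unit_simple hC u hU
  have e : Z ≅ U ⊗ Z := (λ_ Z).symm ≪≫ (whiskerRightIso (asIso u) Z).symm
  exact hZ (hUZ.of_iso e)

theorem mono_coevaluation [CategoryTheory.Linear ℂ C]
    (hC : Function.Bijective fun c : ℂ => c • (𝟙 (𝟙_ C)))
    {Z : C} (hZ : ¬ IsZero Z) : Mono (η_ Z (Zᘁ)) := by
  refine Preadditive.mono_of_cancel_zero _ (fun {W} g hg => ?_)
  haveI hsm : IsSplitMono ((η_ Z (Zᘁ)) ▷ Z) := ⟨⟨⟨(α_ Z (Zᘁ) Z).hom ≫ (Z ◁ ε_ Z (Zᘁ)) ≫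
      (ρ_ Z).hom ≫ (λ_ Z).inv, by simp⟩⟩⟩
  have h1 : (g ▷ Z) ≫ ((η_ Z (Zᘁ)) ▷ Z) = 0 := by
    rw [← comp_whiskerRight, hg]; simp
  have h2 : g ▷ Z = 0 := zero_of_comp_mono _ h1
  have h3 : ((factorThruImage g) ▷ Z) ≫ ((image.ι g) ▷ Z) = 0 := by
    rw [← comp_whiskerRight, image.fac]; exact h2
  haveI := epi_whiskerRight' (factorThruImage g) Z
  have h4 : (image.ι g) ▷ Z = 0 := zero_of_epi_comp ((factorThruImage g) ▷ Z) h3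
  haveI := mono_whiskerRight' (image.ι g) Z
  have h5 : IsZero (image g ⊗ Z) := isZero_of_mono_eq_zero _ h4
  have h6 : IsZero (image g) := isZero_of_tensor_zero hC hZ (image.ι g) h5
  have h7 : image.ι g = 0 := h6.eq_of_src _ _
  rw [← image.fac g, h7]
  simp

theorem whiskerRight_cancel_zero [CategoryTheory.Linear ℂ C]
    (hC : Function.Bijective fun c : ℂ => c • (𝟙 (𝟙_ C)))
    {Z : C} (hZ : ¬ IsZero Z) {X Y : C} (h : X ⟶ Y)
    (hw : h ▷ Z = 0) : h = 0 := by
  have h1 : h ▷ (Z ⊗ (Zᘁ)) = 0 := by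
    rw [MonoidalCategory.whiskerRight_tensor, hw]
    simp
  have h2 : (h ≫ (ρ_ Y).inv) ≫ (Y ◁ η_ Z (Zᘁ)) = 0 := by
    rw [Category.assoc, MonoidalCategory.rightUnitor_inv_naturality_assoc h,
      ← whisker_exchange, h1]
    simp
  haveI : Mono (η_ Z (Zᘁ)) := mono_coevaluation hC hZ
  haveI : Mono (Y ◁ η_ Z (Zᘁ)) := mono_whiskerLeft' Y _
  have h4 : h ≫ (ρ_ Y).inv = 0 := zero_of_comp_mono _ h2
  exact comp_iso_zero h4

end Simple

section FunctorHelpers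

variable {E : Type u₂} [Category.{v₂} E] [MonoidalCategory E]
variable {C' : Type u₃} [Category.{v₃} C'] [MonoidalCategory C']

open Functor.LaxMonoidal Functor.OplaxMonoidal

lemma map_section_of_section (G : E ⥤ C') [G.Monoidal] {X Y T : E} (f : X ⟶ Y)
    (s₀ : G.obj Y ⊗ G.obj T ⟶ G.obj X ⊗ G.obj T)
    (hs₀ : s₀ ≫ (G.map f ▷ G.obj T) = 𝟙 _) :
    (δ G Y T ≫ s₀ ≫ μ G X T) ≫ G.map (f ▷ T) = 𝟙 _ := by
  rw [Functor.Monoidal.map_whiskerRight]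
  calc (δ G Y T ≫ s₀ ≫ μ G X T) ≫ δ G X T ≫ (G.map f ▷ G.obj T) ≫ μ G Y T
      = δ G Y T ≫ s₀ ≫ (μ G X T ≫ δ G X T) ≫ (G.map f ▷ G.obj T) ≫ μ G Y T := by
        simp only [Category.assoc]
    _ = δ G Y T ≫ (s₀ ≫ (G.map f ▷ G.obj T)) ≫ μ G Y T := by
        rw [Functor.Monoidal.μ_δ]; simp only [Category.id_comp, Category.assoc]
    _ = 𝟙 _ := by rw [hs₀]; simp

lemma map_retraction_of_retraction (G : E ⥤ C') [G.Monoidal] {X Y T : E} (f : X ⟶ Y)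
    (r₀ : G.obj Y ⊗ G.obj T ⟶ G.obj X ⊗ G.obj T)
    (hr₀ : (G.map f ▷ G.obj T) ≫ r₀ = 𝟙 _) :
    G.map (f ▷ T) ≫ (δ G Y T ≫ r₀ ≫ μ G X T) = 𝟙 _ := by
  rw [Functor.Monoidal.map_whiskerRight]
  calc (δ G X T ≫ (G.map f ▷ G.obj T) ≫ μ G Y T) ≫ δ G Y T ≫ r₀ ≫ μ G X T
      = δ G X T ≫ (G.map f ▷ G.obj T) ≫ (μ G Y T ≫ δ G Y T) ≫ r₀ ≫ μ G X T := by
        simp only [Category.assoc]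
    _ = δ G X T ≫ ((G.map f ▷ G.obj T) ≫ r₀) ≫ μ G X T := by
        rw [Functor.Monoidal.μ_δ]; simp only [Category.id_comp, Category.assoc]
    _ = 𝟙 _ := by rw [hr₀]; simp

lemma section_whisker_of_section (G : E ⥤ C') [G.Monoidal] {X Y T : E} (f : X ⟶ Y)
    (s : Y ⊗ T ⟶ X ⊗ T) (hs : s ≫ (f ▷ T) = 𝟙 _) :
    (μ G Y T ≫ G.map s ≫ δ G X T) ≫ (G.map f ▷ G.obj T) = 𝟙 _ := by
  have hcomm : δ G X T ≫ (G.map f ▷ G.obj T) = G.map (f ▷ T) ≫ δ G Y T := by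
    rw [Functor.Monoidal.map_whiskerRight]; simp
  calc (μ G Y T ≫ G.map s ≫ δ G X T) ≫ (G.map f ▷ G.obj T)
      = μ G Y T ≫ G.map s ≫ (δ G X T ≫ (G.map f ▷ G.obj T)) := by simp only [Category.assoc]
    _ = μ G Y T ≫ (G.map s ≫ G.map (f ▷ T)) ≫ δ G Y T := by rw [hcomm]; simp only [Category.assoc]
    _ = μ G Y T ≫ δ G Y T := by rw [← G.map_comp, hs, G.map_id]; simp
    _ = 𝟙 _ := by simp

lemma retraction_whisker_of_retraction (G : E ⥤ C') [G.Monoidal] {X Y T : E} (f : X ⟶ Y)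
    (r : Y ⊗ T ⟶ X ⊗ T) (hr : (f ▷ T) ≫ r = 𝟙 _) :
    (G.map f ▷ G.obj T) ≫ (μ G Y T ≫ G.map r ≫ δ G X T) = 𝟙 _ := by
  have hcomm : (G.map f ▷ G.obj T) ≫ μ G Y T = μ G X T ≫ G.map (f ▷ T) :=
    Functor.LaxMonoidal.μ_natural_left (F := G) f T
  calc (G.map f ▷ G.obj T) ≫ μ G Y T ≫ G.map r ≫ δ G X T
      = (μ G X T ≫ G.map (f ▷ T)) ≫ G.map r ≫ δ G X T := by
        rw [← Category.assoc, hcomm]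
    _ = μ G X T ≫ (G.map (f ▷ T) ≫ G.map r) ≫ δ G X T := by simp only [Category.assoc]
    _ = μ G X T ≫ δ G X T := by rw [← G.map_comp, hr, G.map_id]; simp
    _ = 𝟙 _ := by simp

end FunctorHelpers

end DeligneAux

end DeligneAux

open DeligneAux in
theorem deligne_faithful_SM_functor_preexact
    {D : Type u₁} [Category.{v₁} D] [Preadditive D] [CategoryTheory.Linear ℂ D]
    [HasFiniteBiproducts D] [MonoidalCategory D] [SymmetricCategory D]
    [MonoidalPreadditive D] [MonoidalLinear ℂ D] [RigidCategory D]
    {V : Type u₂} [Category.{v₂} V] [Abelian V] [CategoryTheory.Linear ℂ V]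
    [MonoidalCategory V] [SymmetricCategory V] [MonoidalPreadditive V]
    [MonoidalLinear ℂ V] [RigidCategory V]
    (hV : Function.Bijective fun c : ℂ => c • (𝟙 (𝟙_ V)))
    (I : D ⥤ V) [I.Braided] [I.Additive] [I.Linear ℂ] [I.Full] [I.Faithful]
    (h2 : ∀ M : V, ∃ (P Q : D) (f : P ⟶ Q), Nonempty (image (I.map f) ≅ M))
    (h3e : ∀ ⦃X Y : V⦄ (g : X ⟶ Y), Epi g →
      ∃ T : D, ¬ IsZero T ∧ IsSplitEpi (g ▷ I.obj T))
    (h3m : ∀ ⦃X Y : V⦄ (g : X ⟶ Y), Mono g →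
      ∃ T : D, ¬ IsZero T ∧ IsSplitMono (g ▷ I.obj T))
    {A : Type u₃} [Category.{v₃} A] [Abelian A] [CategoryTheory.Linear ℂ A]
    [MonoidalCategory A] [SymmetricCategory A] [MonoidalPreadditive A]
    [MonoidalLinear ℂ A] [RigidCategory A]
    (hA : Function.Bijective fun c : ℂ => c • (𝟙 (𝟙_ A)))
    (F : D ⥤ A) [F.Braided] [F.Faithful] :
    ∀ ⦃X Y : D⦄ (f : X ⟶ Y),
      (Epi (I.map f) → Epi (F.map f)) ∧ (Mono (I.map f) → Mono (F.map f)) := by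
  intro X Y f
  constructor
  · -- epi case
    intro hIf
    obtain ⟨T, hT, hsplit⟩ := h3e (I.map f) hIf
    obtain ⟨se⟩ := hsplit.exists_splitEpi
    -- lift the section to D
    have htsec := map_section_of_section I f se.section_ se.id
    set s : Y ⊗ T ⟶ X ⊗ T := I.preimage
      (Functor.OplaxMonoidal.δ I Y T ≫ se.section_ ≫ Functor.LaxMonoidal.μ I X T) with hs
    have hsD : s ≫ (f ▷ T) = 𝟙 (Y ⊗ T) := by
      apply I.map_injective
      rw [I.map_comp, I.map_preimage, I.map_id]
      exact htsec
    -- F.map f ▷ F.obj T is a split epi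
    have hFsec := section_whisker_of_section F f s hsD
    haveI hFT : IsSplitEpi (F.map f ▷ F.obj T) :=
      IsSplitEpi.mk' ⟨_, hFsec⟩
    haveI hFTepi : Epi (F.map f ▷ F.obj T) := inferInstance
    -- F.obj T is nonzero
    have hFTnz : ¬ IsZero (F.obj T) := by
      intro hz
      apply hT
      rw [IsZero.iff_id_eq_zero]
      apply F.map_injective
      calc F.map (𝟙 T) = F.map (0 : T ⟶ T) := hz.eq_of_src _ _
        _ = F.map 0 := rfl
    refine Preadditive.epi_of_cancel_zero _ (fun {W} g hg => ?_)
    have h1 : (F.map f ▷ F.obj T) ≫ (g ▷ F.obj T) = 0 := by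
      rw [← comp_whiskerRight, hg]; simp
    have h2' : g ▷ F.obj T = 0 := zero_of_epi_comp _ h1
    exact whiskerRight_cancel_zero hA hFTnz g h2'
  · -- mono case
    intro hIf
    obtain ⟨T, hT, hsplit⟩ := h3m (I.map f) hIf
    obtain ⟨sm⟩ := hsplit.exists_splitMono
    have htret := map_retraction_of_retraction I f sm.retraction sm.id
    set s : Y ⊗ T ⟶ X ⊗ T := I.preimage
      (Functor.OplaxMonoidal.δ I Y T ≫ sm.retraction ≫ Functor.LaxMonoidal.μ I X T) with hs
    have hsD : (f ▷ T) ≫ s = 𝟙 (X ⊗ T) := by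
      apply I.map_injective
      rw [I.map_comp, I.map_preimage, I.map_id]
      exact htret
    have hFret := retraction_whisker_of_retraction F f s hsD
    haveI hFT : IsSplitMono (F.map f ▷ F.obj T) :=
      IsSplitMono.mk' ⟨_, hFret⟩
    haveI hFTmono : Mono (F.map f ▷ F.obj T) := inferInstance
    have hFTnz : ¬ IsZero (F.obj T) := by
      intro hz
      apply hT
      rw [IsZero.iff_id_eq_zero]
      apply F.map_injective
      calc F.map (𝟙 T) = F.map (0 : T ⟶ T) := hz.eq_of_src _ _
        _ = F.map 0 := rfl
    refine Preadditive.mono_of_cancel_zero _ (fun {W} g hg => ?_)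
    have h1 : (g ▷ F.obj T) ≫ (F.map f ▷ F.obj T) = 0 := by
      rw [← comp_whiskerRight, hg]; simp
    have h2' : g ▷ F.obj T = 0 := zero_of_comp_mono _ h1
    exact whiskerRight_cancel_zero hA hFTnz g h2'
end

section
/- Let 𝒟 be an additive ℂ-linear rigid symmetric monoidal category, 𝒱 a tensor category, and I : 𝒟 → 𝒱 a ℂ-linear symmetric monoidal functor satisfying assumptions (1)–(3). Let f : M → N be a morphism in 𝒱, let α : I(X) → M and α′ : I(X′) → N be epimorphisms, and let β : M → I(Y) and β′ : N → I(Y′) be monomorphisms, with X, X′, Y, Y′ objects of 𝒟. Then there exist objects R, S of 𝒟 and morphisms p : I(R) → I(X), p′ : I(R) → I(X′), q : I(Y) → I(S), q′ : I(Y′) → I(S) such that p is an epimorphism, q′ is a monomorphism, f ∘ α ∘ p = α′ ∘ p′, and q ∘ β = q′ ∘ β′ ∘ f. (Nonemptiness of the category of presentations of the morphism f.) -/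
/-!
STATEMENT 8 (nonemptiness of the category of presentations): with `I : 𝒟 ⥤ 𝒱` as in the
universality setup, given a morphism `f : M ⟶ N` of `𝒱`, epimorphisms `α : I X ⟶ M`,
`α′ : I X′ ⟶ N` and monomorphisms `β : M ⟶ I Y`, `β′ : N ⟶ I Y′`, there exist `R, S : 𝒟`
and morphisms `p : I R ⟶ I X`, `p′ : I R ⟶ I X′`, `q : I Y ⟶ I S`, `q′ : I Y′ ⟶ I S`
with `p` an epimorphism, `q′` a monomorphism, `f ∘ α ∘ p = α′ ∘ p′` and
`q ∘ β = q′ ∘ β′ ∘ f`.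
-/

open CategoryTheory CategoryTheory.Limits CategoryTheory.MonoidalCategory

universe v₁ v₂ v₃ u₁ u₂ u₃

theorem deligne_presentations_nonempty
    {D : Type u₁} [Category.{v₁} D] [Preadditive D] [CategoryTheory.Linear ℂ D]
    [HasFiniteBiproducts D] [MonoidalCategory D] [SymmetricCategory D]
    [MonoidalPreadditive D] [MonoidalLinear ℂ D] [RigidCategory D]
    {V : Type u₂} [Category.{v₂} V] [Abelian V] [CategoryTheory.Linear ℂ V]
    [MonoidalCategory V] [SymmetricCategory V] [MonoidalPreadditive V]
    [MonoidalLinear ℂ V] [RigidCategory V]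
    (hV : Function.Bijective fun c : ℂ => c • (𝟙 (𝟙_ V)))
    (I : D ⥤ V) [I.Braided] [I.Additive] [I.Linear ℂ] [I.Full] [I.Faithful]
    (h2 : ∀ M : V, ∃ (P Q : D) (f : P ⟶ Q), Nonempty (image (I.map f) ≅ M))
    (h3e : ∀ ⦃X Y : V⦄ (g : X ⟶ Y), Epi g →
      ∃ T : D, ¬ IsZero T ∧ IsSplitEpi (g ▷ I.obj T))
    (h3m : ∀ ⦃X Y : V⦄ (g : X ⟶ Y), Mono g →
      ∃ T : D, ¬ IsZero T ∧ IsSplitMono (g ▷ I.obj T))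
    {M N : V} (f : M ⟶ N) {X X' Y Y' : D}
    (α : I.obj X ⟶ M) (hα : Epi α) (α' : I.obj X' ⟶ N) (hα' : Epi α')
    (β : M ⟶ I.obj Y) (hβ : Mono β) (β' : N ⟶ I.obj Y') (hβ' : Mono β') :
    ∃ (R S : D) (p : I.obj R ⟶ I.obj X) (p' : I.obj R ⟶ I.obj X')
      (q : I.obj Y ⟶ I.obj S) (q' : I.obj Y' ⟶ I.obj S),
      Epi p ∧ Mono q' ∧ p ≫ α ≫ f = p' ≫ α' ∧ β ≫ q = f ≫ β' ≫ q' := by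
  -- Pullback of `α ≫ f` and `α'`
  obtain ⟨P₁, P₂, g, ⟨e⟩⟩ := h2 (pullback (α ≫ f) α')
  obtain ⟨Q₁, Q₂, h, ⟨e'⟩⟩ := h2 (pushout β (f ≫ β'))
  refine ⟨P₁, Q₂, factorThruImage (I.map g) ≫ e.hom ≫ pullback.fst _ _,
    factorThruImage (I.map g) ≫ e.hom ≫ pullback.snd _ _,
    pushout.inl _ _ ≫ e'.inv ≫ image.ι (I.map h),
    pushout.inr _ _ ≫ e'.inv ≫ image.ι (I.map h), ?_, ?_, ?_, ?_⟩
  · have : Epi (pullback.fst (α ≫ f) α') := Abelian.epi_pullback_of_epi_g _ _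
    exact epi_comp _ _
  · have : Mono (pushout.inr β (f ≫ β')) := Abelian.mono_pushout_of_mono_f _ _
    exact mono_comp _ _
  · simp only [Category.assoc]
    rw [pullback.condition]
  · simp only [← Category.assoc]
    rw [← pushout.condition]
end

section
/- Let 𝒯 be a tensor category, let g : M → M′ be an epimorphism in 𝒯, and let M′^* denote a dual of M′ with coevaluation coev : 𝟙 → M′ ⊗ M′^*. Let P be the pullback of g ⊗ id_{M′^*} : M ⊗ M′^* → M′ ⊗ M′^* along coev : 𝟙 → M′ ⊗ M′^*, with induced morphism π : P → 𝟙. If Z is an object of 𝒯 such that id_Z ⊗ π : Z ⊗ P → Z ⊗ 𝟙 is a split epimorphism, then id_Z ⊗ g : Z ⊗ M → Z ⊗ M′ is a split epimorphism. -/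
/-!
STATEMENT 10: let `𝒯` be a tensor category (rigid symmetric monoidal abelian `ℂ`-linear,
`End 𝟙 ≅ ℂ`), `g : M ⟶ M′` an epimorphism in `𝒯`, and `M′^*` a dual of `M′` with
coevaluation `coev : 𝟙 ⟶ M′ ⊗ M′^*`.  Let `P` be the pullback of
`g ▷ M′^* : M ⊗ M′^* ⟶ M′ ⊗ M′^*` along `coev`, with induced morphism `π : P ⟶ 𝟙`.
If `Z` is an object such that `Z ◁ π : Z ⊗ P ⟶ Z ⊗ 𝟙` is a split epimorphism, then
`Z ◁ g : Z ⊗ M ⟶ Z ⊗ M′` is a split epimorphism.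
-/

open CategoryTheory CategoryTheory.Limits CategoryTheory.MonoidalCategory

universe v₁ u₁

theorem tensor_splitting_from_pullback
    {T : Type u₁} [Category.{v₁} T] [Abelian T] [CategoryTheory.Linear ℂ T]
    [MonoidalCategory T] [SymmetricCategory T] [MonoidalPreadditive T]
    [MonoidalLinear ℂ T] [RigidCategory T]
    (hT : Function.Bijective fun c : ℂ => c • (𝟙 (𝟙_ T)))
    {M M' : T} (g : M ⟶ M') [Epi g] (Mdual : T) [ExactPairing M' Mdual]
    (Z : T)
    (hZ : IsSplitEpi (Z ◁ (pullback.snd (g ▷ Mdual) (η_ M' Mdual)))) :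
    IsSplitEpi (Z ◁ g) := by
  set π := pullback.snd (g ▷ Mdual) (η_ M' Mdual) with hπ
  set p := pullback.fst (g ▷ Mdual) (η_ M' Mdual) with hp
  obtain ⟨⟨s, hs⟩⟩ := hZ
  refine ⟨⟨⟨(ρ_ Z).inv ▷ M' ≫ s ▷ M' ≫ (Z ◁ p) ▷ M' ≫
      (α_ Z (M ⊗ Mdual) M').hom ≫ Z ◁ (α_ M Mdual M').hom ≫
      Z ◁ (M ◁ ε_ M' Mdual) ≫ Z ◁ (ρ_ M).hom, ?_⟩⟩⟩
  have key : Z ◁ p ≫ Z ◁ (g ▷ Mdual) = Z ◁ π ≫ Z ◁ η_ M' Mdual := by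
    rw [← MonoidalCategory.whiskerLeft_comp, ← MonoidalCategory.whiskerLeft_comp,
      pullback.condition]
  have tri := ExactPairing.evaluation_coevaluation M' Mdual
  -- push `g` to the left of the composite
  have step1 : (α_ Z (M ⊗ Mdual) M').hom ≫ Z ◁ (α_ M Mdual M').hom ≫
      Z ◁ (M ◁ ε_ M' Mdual) ≫ Z ◁ (ρ_ M).hom ≫ Z ◁ g
      = (Z ◁ (g ▷ Mdual)) ▷ M' ≫ (α_ Z (M' ⊗ Mdual) M').hom ≫ Z ◁ (α_ M' Mdual M').hom ≫
        Z ◁ (M' ◁ ε_ M' Mdual) ≫ Z ◁ (ρ_ M').hom := by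
    rw [associator_naturality_middle_assoc]
    simp only [← MonoidalCategory.whiskerLeft_comp]
    congr 1
    rw [associator_naturality_left_assoc, ← whisker_exchange_assoc]
    simp
  have step2 : (Z ◁ η_ M' Mdual) ▷ M' ≫ (α_ Z (M' ⊗ Mdual) M').hom ≫
      Z ◁ (α_ M' Mdual M').hom ≫ Z ◁ (M' ◁ ε_ M' Mdual) ≫ Z ◁ (ρ_ M').hom
      = (α_ Z (𝟙_ T) M').hom ≫ Z ◁ (λ_ M').hom := by
    rw [associator_naturality_middle_assoc]
    simp only [← MonoidalCategory.whiskerLeft_comp]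
    congr 1
    have tri' := reassoc_of% tri
    rw [tri']
    simp
  simp only [Category.assoc]
  rw [step1, ← comp_whiskerRight_assoc (Z ◁ p), key, comp_whiskerRight_assoc,
    ← comp_whiskerRight_assoc s, hs, MonoidalCategory.id_whiskerRight, Category.id_comp, step2]
  simp
end
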